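/- arXiv:2402.06103 — 8 statements merged into one kernel-verified Lean document; each statement's English description precedes it below -/
import Mathlib

section
/- Let m ≥ 1 and t_0 < t_1 < ... < t_m be real numbers, and let g be a function defined at these points such that (-1)^{m-i}(g(t_i) - g(t_{i-1})) ≥ 0 for all 1 ≤ i ≤ m. Then the divided difference [t_0, t_1, ..., t_m; g] is nonnegative. -/
open Finset

/-- Divided difference of order `m` of `g` at knots `t 0, …, t m`. -/
noncomputable def divDiff (m : ℕ) (t : ℕ → ℝ) (g : ℝ → ℝ) : ℝ :=
  ∑ i ∈ Finset.range (m + 1),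
    g (t i) / ∏ j ∈ (Finset.range (m + 1)).erase i, (t i - t j)

noncomputable def Pp (t : ℕ → ℝ) (a b i : ℕ) : ℝ :=
  ∏ j ∈ (Finset.Icc a b).erase i, (t i - t j)

noncomputable def dd (t : ℕ → ℝ) (f : ℕ → ℝ) (a b : ℕ) : ℝ :=
  ∑ i ∈ Finset.Icc a b, f i / Pp t a b i

noncomputable def Hs (s i : ℕ) : ℝ := if s ≤ i then 1 else 0

section aux
variable {m : ℕ} {t : ℕ → ℝ}

lemma t_sub_ne (ht : ∀ i j, i < j → j ≤ m → t i < t j)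
    {i j : ℕ} (hi : i ≤ m) (hj : j ≤ m) (hij : i ≠ j) : t i - t j ≠ 0 := by
  rcases lt_or_gt_of_ne hij with h | h
  · exact sub_ne_zero.mpr (ne_of_lt (ht i j h hj))
  · exact sub_ne_zero.mpr (ne_of_gt (ht j i h hi))

lemma Pp_ne_zero (ht : ∀ i j, i < j → j ≤ m → t i < t j)
    {a b i : ℕ} (hb : b ≤ m) (hi : i ≤ m) : Pp t a b i ≠ 0 := by
  apply Finset.prod_ne_zero_iff.mpr
  intro j hj
  have hj' := Finset.mem_of_mem_erase hj
  have hne := Finset.ne_of_mem_erase hj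
  simp only [Finset.mem_Icc] at hj'
  exact t_sub_ne ht hi (le_trans hj'.2 hb) (Ne.symm hne)

lemma dd_single (f : ℕ → ℝ) (a : ℕ) : dd t f a a = f a := by
  simp [dd, Pp]

lemma Icc_eq_insert_left {a b : ℕ} (hab : a ≤ b) :
    Finset.Icc a b = insert a (Finset.Icc (a+1) b) := by
  rw [Finset.Icc_add_one_left_eq_Ioc, Finset.Ioc_insert_left hab]

lemma Icc_eq_insert_right {a b : ℕ} (hab : a < b) :
    Finset.Icc a b = insert b (Finset.Icc a (b-1)) := by
  have : Finset.Icc a (b-1) = Finset.Ico a b := by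
    rw [← Finset.Ico_add_one_right_eq_Icc]
    congr 1
    omega
  rw [this, Finset.Ico_insert_right (le_of_lt hab)]

lemma Pp_left (ht : ∀ i j, i < j → j ≤ m → t i < t j)
    {a b i : ℕ} (hab : a < b) (hi : i ∈ Finset.Icc (a+1) b) :
    Pp t a b i = (t i - t a) * Pp t (a+1) b i := by
  have hia : i ≠ a := by
    simp only [Finset.mem_Icc] at hi; omega
  have hnot : a ∉ (Finset.Icc (a+1) b).erase i := by
    intro h
    have := Finset.mem_of_mem_erase h
    simp only [Finset.mem_Icc] at this; omega
  rw [Pp, Icc_eq_insert_left (le_of_lt hab), Finset.erase_insert_of_ne (Ne.symm hia),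
    Finset.prod_insert hnot]
  rfl

lemma Pp_right (ht : ∀ i j, i < j → j ≤ m → t i < t j)
    {a b i : ℕ} (hab : a < b) (hi : i ∈ Finset.Icc a (b-1)) :
    Pp t a b i = (t i - t b) * Pp t a (b-1) i := by
  have hib : i ≠ b := by
    simp only [Finset.mem_Icc] at hi; omega
  have hnot : b ∉ (Finset.Icc a (b-1)).erase i := by
    intro h
    have := Finset.mem_of_mem_erase h
    simp only [Finset.mem_Icc] at this; omega
  rw [Pp, Icc_eq_insert_right hab, Finset.erase_insert_of_ne (Ne.symm hib),
    Finset.prod_insert hnot]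
  rfl

lemma dd_rec (ht : ∀ i j, i < j → j ≤ m → t i < t j)
    {a b : ℕ} (hab : a < b) (hb : b ≤ m) (f : ℕ → ℝ) :
    (t b - t a) * dd t f a b = dd t f (a+1) b - dd t f a (b-1) := by
  have hA : ∑ i ∈ Finset.Icc a b, f i * (t i - t a) / Pp t a b i
      = dd t f (a+1) b := by
    rw [Icc_eq_insert_left (le_of_lt hab), Finset.sum_insert (by simp)]
    have h0 : f a * (t a - t a) / Pp t a b a = 0 := by
      rw [sub_self, mul_zero, zero_div]
    rw [h0, zero_add]
    apply Finset.sum_congr rfl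
    intro i hi
    have hi' : i ∈ Finset.Icc (a+1) b := hi
    have him : i ≤ m := by
      simp only [Finset.mem_Icc] at hi'; omega
    have hne : t i - t a ≠ 0 := by
      apply t_sub_ne ht him (by omega)
      simp only [Finset.mem_Icc] at hi'; omega
    rw [Pp_left ht hab hi', mul_comm (f i), mul_div_mul_left _ _ hne]
  have hB : ∑ i ∈ Finset.Icc a b, f i * (t i - t b) / Pp t a b i
      = dd t f a (b-1) := by
    rw [Icc_eq_insert_right hab, Finset.sum_insert (by simp [Finset.mem_Icc]; omega)]
    have h0 : f b * (t b - t b) / Pp t a b b = 0 := by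
      rw [sub_self, mul_zero, zero_div]
    rw [h0, zero_add]
    apply Finset.sum_congr rfl
    intro i hi
    have hi' : i ∈ Finset.Icc a (b-1) := hi
    have him : i ≤ m := by
      simp only [Finset.mem_Icc] at hi'; omega
    have hne : t i - t b ≠ 0 := by
      apply t_sub_ne ht him hb
      simp only [Finset.mem_Icc] at hi'; omega
    rw [Pp_right ht hab hi', mul_comm (f i), mul_div_mul_left _ _ hne]
  rw [← hA, ← hB, dd, Finset.mul_sum, ← Finset.sum_sub_distrib]
  apply Finset.sum_congr rfl
  intro i hi
  rw [div_sub_div_same, ← mul_div_assoc]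
  congr 1
  ring

lemma dd_rec' (ht : ∀ i j, i < j → j ≤ m → t i < t j)
    {a b : ℕ} (hab : a < b) (hb : b ≤ m) (f : ℕ → ℝ) :
    dd t f a b = (dd t f (a+1) b - dd t f a (b-1)) / (t b - t a) := by
  rw [eq_div_iff (t_sub_ne ht hb (by omega) (by omega)), mul_comm]
  exact dd_rec ht hab hb f

lemma dd_congr {f f' : ℕ → ℝ} {a b : ℕ}
    (h : ∀ i ∈ Finset.Icc a b, f i = f' i) : dd t f a b = dd t f' a b := by
  apply Finset.sum_congr rfl
  intro i hi
  rw [h i hi]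

lemma dd_one_zero (ht : ∀ i j, i < j → j ≤ m → t i < t j) :
    ∀ n a b, b = a + n → a < b → b ≤ m → dd t (fun _ => (1:ℝ)) a b = 0 := by
  intro n
  induction n with
  | zero => intro a b h1 h2 _; omega
  | succ k ih =>
    intro a b h1 h2 hb
    rw [dd_rec' ht h2 hb]
    rcases Nat.lt_or_ge (a+1) b with h | h
    · rw [ih (a+1) b (by omega) h hb, ih a (b-1) (by omega) (by omega) (by omega),
        sub_zero, zero_div]
    · have hba : b = a + 1 := by omega
      have hb1 : b - 1 = a := by omega
      rw [hba] at *
      rw [dd_single, hb1, dd_single, sub_self, zero_div]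

lemma dd_Hs_gt (s a b : ℕ) (hs : b < s) : dd t (Hs s) a b = 0 := by
  apply Finset.sum_eq_zero
  intro i hi
  simp only [Finset.mem_Icc] at hi
  have hni : ¬ s ≤ i := by omega
  simp [Hs, hni]

lemma dd_Hs_sign (ht : ∀ i j, i < j → j ≤ m → t i < t j) :
    ∀ n a b s, b = a + n → b ≤ m → a < s → s ≤ b →
      0 ≤ (-1 : ℝ) ^ (b - s) * dd t (Hs s) a b := by
  intro n
  induction n with
  | zero => intro a b s h1 _ h2 h3; omega
  | succ k ih =>
    intro a b s h1 hb hs1 hs2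
    have hab : a < b := by omega
    rw [dd_rec' ht hab hb]
    have hpos : 0 < t b - t a := sub_pos.mpr (ht a b hab hb)
    rw [← mul_div_assoc]
    apply div_nonneg _ (le_of_lt hpos)
    rw [mul_sub]
    have hterm1 : 0 ≤ (-1 : ℝ) ^ (b - s) * dd t (Hs s) (a+1) b := by
      rcases Nat.lt_or_ge (a+1) s with h | h
      · exact ih (a+1) b s (by omega) hb h hs2
      · -- s = a + 1
        have hsa : s = a + 1 := by omega
        rcases Nat.lt_or_ge s b with h2 | h2
        · have hcongr : dd t (Hs s) (a+1) b = dd t (fun _ => (1:ℝ)) (a+1) b := by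
            apply dd_congr
            intro i hi
            simp only [Finset.mem_Icc] at hi
            have hsi : s ≤ i := by omega
            simp [Hs, hsi]
          rw [hcongr, dd_one_zero ht k (a+1) b (by omega) (by omega) hb, mul_zero]
        · have hsb : s = b := by omega
          have hba : b = a + 1 := by omega
          rw [hba, dd_single]
          have hsi : s ≤ a + 1 := by omega
          have : Hs s (a+1) = 1 := by simp [Hs, hsi]
          rw [this]
          have : b - s = 0 := by omega
          rw [hba] at this
          rw [this, pow_zero, mul_one]
          norm_num
    have hterm2 : 0 ≤ -((-1 : ℝ) ^ (b - s) * dd t (Hs s) a (b-1)) := by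
      rcases Nat.lt_or_ge s b with h | h
      · have hexp : b - s = (b - 1 - s) + 1 := by omega
        rw [hexp, pow_succ]
        have := ih a (b-1) s (by omega) (by omega) hs1 (by omega)
        nlinarith [this]
      · have hsb : s = b := by omega
        rw [dd_Hs_gt s a (b-1) (by omega), mul_zero, neg_zero]
    linarith
end aux

lemma tele (F : ℕ → ℝ) : ∀ i : ℕ, ∑ s ∈ Finset.Ioc 0 i, (F s - F (s-1)) = F i - F 0 := by
  intro i
  induction i with
  | zero => simp
  | succ k ih =>
    rw [Finset.sum_Ioc_succ_top (by omega), ih]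
    have : k + 1 - 1 = k := by omega
    rw [this]
    ring

theorem stmt0 (m : ℕ) (hm : 1 ≤ m) (t : ℕ → ℝ) (g : ℝ → ℝ)
    (ht : ∀ i < m, t i < t (i + 1))
    (hg : ∀ i, 1 ≤ i → i ≤ m → 0 ≤ (-1 : ℝ) ^ (m - i) * (g (t i) - g (t (i - 1)))) :
    0 ≤ divDiff m t g := by
  -- strict monotonicity
  have hmono : ∀ i j, i < j → j ≤ m → t i < t j := by
    have key : ∀ j, j ≤ m → ∀ i, i < j → t i < t j := by
      intro j
      induction j with
      | zero => intro _ i hi; omega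
      | succ n ihn =>
        intro hjm i hi
        rcases Nat.lt_succ_iff_lt_or_eq.mp hi with h | h
        · exact lt_trans (ihn (by omega) i h) (ht n (by omega))
        · subst h; exact ht i (by omega)
    intro i j h1 h2; exact key j h2 i h1
  -- divDiff = dd over Icc 0 m
  have hrange : Finset.range (m+1) = Finset.Icc 0 m := by
    ext i; simp [Nat.lt_succ_iff]
  have hdd : divDiff m t g = dd t (fun i => g (t i)) 0 m := by
    rw [divDiff, dd]
    apply Finset.sum_congr hrange
    intro i _
    rw [Pp, hrange]
  rw [hdd]
  -- decomposition
  set F : ℕ → ℝ := fun i => g (t i) with hF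
  have hdecomp : ∀ i ∈ Finset.Icc 0 m,
      F i = F 0 + ∑ s ∈ Finset.Icc 1 m, (F s - F (s-1)) * Hs s i := by
    intro i hi
    simp only [Finset.mem_Icc] at hi
    have hIoc : Finset.Icc 1 m = Finset.Ioc 0 m := by
      ext x; simp [Nat.lt_iff_add_one_le]
    rw [hIoc]
    rw [← Finset.sum_Ioc_consecutive _ (Nat.zero_le i) hi.2]
    have h1 : ∑ s ∈ Finset.Ioc 0 i, (F s - F (s-1)) * Hs s i
        = ∑ s ∈ Finset.Ioc 0 i, (F s - F (s-1)) := by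
      apply Finset.sum_congr rfl
      intro s hsmem
      simp only [Finset.mem_Ioc] at hsmem
      simp only [Hs, if_pos hsmem.2, mul_one]
    have h2 : ∑ s ∈ Finset.Ioc i m, (F s - F (s-1)) * Hs s i = 0 := by
      apply Finset.sum_eq_zero
      intro s hsmem
      simp only [Finset.mem_Ioc] at hsmem
      have hni : ¬ s ≤ i := by omega
      simp [Hs, hni]
    rw [h1, h2, add_zero, tele]
    ring
  rw [dd_congr hdecomp]
  have hexpand : dd t (fun i => F 0 + ∑ s ∈ Finset.Icc 1 m, (F s - F (s-1)) * Hs s i) 0 m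
      = F 0 * dd t (fun _ => (1:ℝ)) 0 m
        + ∑ s ∈ Finset.Icc 1 m, (F s - F (s-1)) * dd t (Hs s) 0 m := by
    simp only [dd]
    have step1 : ∀ i ∈ Finset.Icc 0 m,
        (F 0 + ∑ s ∈ Finset.Icc 1 m, (F s - F (s-1)) * Hs s i) / Pp t 0 m i
        = F 0 * (1 / Pp t 0 m i)
          + ∑ s ∈ Finset.Icc 1 m, (F s - F (s-1)) * (Hs s i / Pp t 0 m i) := by
      intro i _
      rw [add_div, Finset.sum_div, mul_one_div]
      congr 1
      apply Finset.sum_congr rfl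
      intro s _
      rw [mul_div_assoc]
    rw [Finset.sum_congr rfl step1, Finset.sum_add_distrib, Finset.sum_comm]
    congr 1
    · rw [← Finset.mul_sum]
    · apply Finset.sum_congr rfl
      intro s _
      rw [← Finset.mul_sum]
  rw [hexpand, dd_one_zero hmono m 0 m (by omega) (by omega) le_rfl, mul_zero, zero_add]
  apply Finset.sum_nonneg
  intro s hsmem
  simp only [Finset.mem_Icc] at hsmem
  have h1 : 0 ≤ (-1 : ℝ) ^ (m - s) * (F s - F (s-1)) := hg s hsmem.1 hsmem.2
  have h2 : 0 ≤ (-1 : ℝ) ^ (m - s) * dd t (Hs s) 0 m :=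
    dd_Hs_sign hmono m 0 m s (by omega) le_rfl (by omega) hsmem.2
  have hsq : ((-1 : ℝ) ^ (m - s)) * ((-1 : ℝ) ^ (m - s)) = 1 := by
    rw [← pow_add]
    exact Even.neg_one_pow ⟨m - s, by ring⟩
  calc (0:ℝ) ≤ ((-1 : ℝ) ^ (m - s) * (F s - F (s-1))) * ((-1 : ℝ) ^ (m - s) * dd t (Hs s) 0 m) :=
        mul_nonneg h1 h2
    _ = (((-1 : ℝ) ^ (m - s)) * ((-1 : ℝ) ^ (m - s))) * ((F s - F (s-1)) * dd t (Hs s) 0 m) := by ring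
    _ = (F s - F (s-1)) * dd t (Hs s) 0 m := by rw [hsq, one_mul]
end

section
/- Let m ≥ 1 and t_0 < t_1 < ... < t_m be real numbers, and let g be a function defined at these points such that (-1)^{m-i}(g(t_i) - g(t_{i-1})) ≥ 0 for all 1 ≤ i ≤ m. Then (t_m - t_0)^m · |[t_0, t_1, ..., t_m; g]| ≥ max_{0≤i≤m} g(t_i) − min_{0≤i≤m} g(t_i). -/
lemma divDiff_neg (m : ℕ) (t : ℕ → ℝ) (g : ℝ → ℝ) :
    divDiff m t (fun x => -g x) = -divDiff m t g := by
  simp [divDiff, neg_div, Finset.sum_neg_distrib]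

lemma divDiff_zero (t : ℕ → ℝ) (g : ℝ → ℝ) : divDiff 0 t g = g (t 0) := by
  simp [divDiff]

lemma divDiff_rec (n : ℕ) (t : ℕ → ℝ) (g : ℝ → ℝ)
    (ht : ∀ i j, i < j → j ≤ n + 1 → t i < t j) :
    (t (n+1) - t 0) * divDiff (n+1) t g
      = divDiff n (fun i => t (i+1)) g - divDiff n t g := by
  have hne : ∀ i j, i ≠ j → i ≤ n+1 → j ≤ n+1 → t i - t j ≠ 0 := by
    intro i j hij hi hj
    rcases Nat.lt_or_ge i j with h | h
    · exact sub_ne_zero.2 (ne_of_lt (ht i j h hj))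
    · exact sub_ne_zero.2 (ne_of_gt (ht j i (by omega) hi))
  -- shifted sum
  have h1 : divDiff n (fun i => t (i+1)) g
      = ∑ i ∈ Finset.range (n+2),
          (if i = 0 then 0 else
            g (t i) / ∏ j ∈ ((Finset.range (n+2)).erase i).erase 0, (t i - t j)) := by
    rw [Finset.sum_range_succ' _ (n+1), if_pos rfl, add_zero, divDiff]
    apply Finset.sum_congr rfl
    intro i hi
    simp only [Finset.mem_range] at hi
    rw [if_neg (by omega)]
    congr 1
    have hset : ((Finset.range (n+2)).erase (i+1)).erase 0
        = ((Finset.range (n+1)).erase i).image (· + 1) := by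
      ext k
      simp only [Finset.mem_erase, Finset.mem_range, Finset.mem_image]
      constructor
      · rintro ⟨hk0, hki, hkr⟩
        exact ⟨k - 1, ⟨by omega, by omega⟩, by omega⟩
      · rintro ⟨a, ⟨ha, har⟩, rfl⟩
        omega
    rw [hset, Finset.prod_image (by intro a _ b _ h; have h' : a + 1 = b + 1 := h; omega)]
  have h2 : divDiff n t g
      = ∑ i ∈ Finset.range (n+2),
          (if i = n+1 then 0 else
            g (t i) / ∏ j ∈ ((Finset.range (n+2)).erase i).erase (n+1), (t i - t j)) := by
    rw [Finset.sum_range_succ, if_pos rfl, add_zero, divDiff]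
    apply Finset.sum_congr rfl
    intro i hi
    simp only [Finset.mem_range] at hi
    rw [if_neg (by omega)]
    congr 1
    congr 1
    ext k
    simp only [Finset.mem_erase, Finset.mem_range]
    omega
  rw [h1, h2, ← Finset.sum_sub_distrib, divDiff, Finset.mul_sum]
  apply Finset.sum_congr rfl
  intro i hi
  simp only [Finset.mem_range] at hi
  set s := (Finset.range (n+2)).erase i with hs
  by_cases hi0 : i = 0
  · subst hi0
    rw [if_pos rfl, if_neg (show (0:ℕ) ≠ n+1 by omega)]
    have hmem : n+1 ∈ s := by simp [hs]
    have hD : ∏ j ∈ s, (t 0 - t j) = (t 0 - t (n+1)) * ∏ j ∈ s.erase (n+1), (t 0 - t j) :=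
      (Finset.mul_prod_erase s _ hmem).symm
    have hE : ∏ j ∈ s.erase (n+1), (t 0 - t j) ≠ 0 := by
      rw [Finset.prod_ne_zero_iff]
      intro j hj
      simp only [Finset.mem_erase, hs, Finset.mem_range] at hj
      exact hne 0 j (Ne.symm hj.2.1) (by omega) (by omega)
    have ha : t 0 - t (n+1) ≠ 0 := hne 0 (n+1) (by omega) (by omega) le_rfl
    rw [hD]
    field_simp
    ring
  · by_cases hin : i = n+1
    · subst hin
      rw [if_neg (by omega), if_pos rfl]
      have hmem : 0 ∈ s := by simp [hs]
      have hD : ∏ j ∈ s, (t (n+1) - t j)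
          = (t (n+1) - t 0) * ∏ j ∈ s.erase 0, (t (n+1) - t j) :=
        (Finset.mul_prod_erase s _ hmem).symm
      have hE : ∏ j ∈ s.erase 0, (t (n+1) - t j) ≠ 0 := by
        rw [Finset.prod_ne_zero_iff]
        intro j hj
        simp only [Finset.mem_erase, hs, Finset.mem_range] at hj
        exact hne (n+1) j (Ne.symm hj.2.1) le_rfl (by omega)
      have ha : t (n+1) - t 0 ≠ 0 := hne (n+1) 0 (by omega) le_rfl (by omega)
      rw [hD]
      field_simp
      ring
    · rw [if_neg hi0, if_neg hin]
      have hmem0 : 0 ∈ s := by simp [hs]; omega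
      have hmemn : n+1 ∈ s := by simp [hs]; omega
      have hD0 : ∏ j ∈ s, (t i - t j) = (t i - t 0) * ∏ j ∈ s.erase 0, (t i - t j) :=
        (Finset.mul_prod_erase s _ hmem0).symm
      have hDn : ∏ j ∈ s, (t i - t j)
          = (t i - t (n+1)) * ∏ j ∈ s.erase (n+1), (t i - t j) :=
        (Finset.mul_prod_erase s _ hmemn).symm
      have hE : ∏ j ∈ s.erase 0, (t i - t j) ≠ 0 := by
        rw [Finset.prod_ne_zero_iff]
        intro j hj
        simp only [Finset.mem_erase, hs, Finset.mem_range] at hj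
        exact hne i j (Ne.symm hj.2.1) (by omega) (by omega)
      have hF : ∏ j ∈ s.erase (n+1), (t i - t j) ≠ 0 := by
        rw [Finset.prod_ne_zero_iff]
        intro j hj
        simp only [Finset.mem_erase, hs, Finset.mem_range] at hj
        exact hne i j (Ne.symm hj.2.1) (by omega) (by omega)
      have ha : t i - t 0 ≠ 0 := hne i 0 (by omega) (by omega) (by omega)
      have hb : t i - t (n+1) ≠ 0 := hne i (n+1) (by omega) (by omega) le_rfl
      set E := ∏ j ∈ s.erase 0, (t i - t j) with hEdef
      set F := ∏ j ∈ s.erase (n+1), (t i - t j) with hFdef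
      have hrel : (t i - t 0) * E = (t i - t (n+1)) * F := by rw [← hD0, ← hDn]
      rw [hD0]
      field_simp
      linear_combination g (t i) * hrel
lemma sup'_neg' (s : Finset ℕ) (hs : s.Nonempty) (f : ℕ → ℝ) :
    s.sup' hs (fun i => -f i) = - s.inf' hs f := by
  apply le_antisymm
  · apply Finset.sup'_le
    intro i hi
    simp only [neg_le_neg_iff]
    exact Finset.inf'_le _ hi
  · rw [neg_le]
    apply Finset.le_inf'
    intro i hi
    rw [neg_le]
    exact Finset.le_sup' (fun i => -f i) hi
lemma inf'_le_sup'' (s : Finset ℕ) (hs : s.Nonempty) (f : ℕ → ℝ) :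
    s.inf' hs f ≤ s.sup' hs f := by
  obtain ⟨i, hi⟩ := hs
  exact le_trans (Finset.inf'_le f hi) (Finset.le_sup' f hi)
lemma inf'_neg' (s : Finset ℕ) (hs : s.Nonempty) (f : ℕ → ℝ) :
    s.inf' hs (fun i => -f i) = - s.sup' hs f := by
  apply le_antisymm
  · rw [le_neg]
    apply Finset.sup'_le
    intro i hi
    rw [le_neg]
    exact Finset.inf'_le _ hi
  · apply Finset.le_inf'
    intro i hi
    simp only [neg_le_neg_iff]
    exact Finset.le_sup' _ hi

lemma tmono (m : ℕ) (t : ℕ → ℝ) (ht : ∀ i < m, t i < t (i + 1)) :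
    ∀ i j, i < j → j ≤ m → t i < t j := by
  intro i j hij hj
  induction j with
  | zero => omega
  | succ k ih =>
    have hk : t k < t (k+1) := ht k (by omega)
    rcases Nat.lt_or_ge i k with h | h
    · exact lt_trans (ih h (by omega)) hk
    · have : i = k := by omega
      subst this; exact hk

lemma key : ∀ m : ℕ, 1 ≤ m → ∀ (t : ℕ → ℝ) (g : ℝ → ℝ),
    (∀ i < m, t i < t (i + 1)) →
    (∀ i, 1 ≤ i → i ≤ m → 0 ≤ (-1 : ℝ) ^ (m - i) * (g (t i) - g (t (i - 1)))) →
    (Finset.range (m + 1)).sup' Finset.nonempty_range_add_one (fun i => g (t i)) -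
      (Finset.range (m + 1)).inf' Finset.nonempty_range_add_one (fun i => g (t i)) ≤
    (t m - t 0) ^ m * divDiff m t g := by
  intro m hm
  induction m, hm using Nat.le_induction with
  | base =>
    intro t g ht hg
    have hmono := tmono 1 t ht
    have hrec := divDiff_rec 0 t g (by intro i j hij hj; exact hmono i j hij hj)
    rw [divDiff_zero, divDiff_zero] at hrec
    have h01 : g (t 0) ≤ g (t 1) := by
      have := hg 1 le_rfl le_rfl
      simpa using this
    rw [pow_one, hrec]
    have hsup : (Finset.range 2).sup' Finset.nonempty_range_add_one (fun i => g (t i)) ≤ g (t 1) := by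
      apply Finset.sup'_le
      intro i hi
      simp only [Finset.mem_range] at hi
      interval_cases i
      · exact h01
      · exact le_rfl
    have hinf : g (t 0) ≤ (Finset.range 2).inf' Finset.nonempty_range_add_one (fun i => g (t i)) := by
      apply Finset.le_inf'
      intro i hi
      simp only [Finset.mem_range] at hi
      interval_cases i
      · exact le_rfl
      · exact h01
    linarith
  | succ n hn ih =>
    intro t g ht hg
    have hmono := tmono (n+1) t ht
    set f : ℕ → ℝ := fun i => g (t i) with hf
    set A := divDiff n (fun i => t (i+1)) g with hA
    set B := divDiff n t g with hB
    -- IH for shifted knots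
    have ihA := ih (fun i => t (i+1)) g
      (by intro i hi; exact ht (i+1) (by omega))
      (by
        intro i h1 h2
        have := hg (i+1) (by omega) (by omega)
        have he : n + 1 - (i+1) = n - i := by omega
        have he2 : i + 1 - 1 = i := by omega
        rw [he, he2] at this
        have he3 : i - 1 + 1 = i := by omega
        simpa [he3] using this)
    -- IH for -g
    have ihB := ih t (fun x => -g x)
      (by intro i hi; exact ht i (by omega))
      (by
        intro i h1 h2
        have h := hg i (by omega) (by omega)
        have he : n + 1 - i = (n - i) + 1 := by omega
        rw [he, pow_succ] at h
        ring_nf at h ⊢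
        linarith)
    rw [divDiff_neg, sup'_neg', inf'_neg'] at ihB
    set S1 := (Finset.range (n+1)).sup' Finset.nonempty_range_add_one (fun i => g (t (i+1))) with hS1
    set I1 := (Finset.range (n+1)).inf' Finset.nonempty_range_add_one (fun i => g (t (i+1))) with hI1
    set S0 := (Finset.range (n+1)).sup' Finset.nonempty_range_add_one f with hS0
    set I0 := (Finset.range (n+1)).inf' Finset.nonempty_range_add_one f with hI0
    set M := (Finset.range (n+2)).sup' Finset.nonempty_range_add_one f with hM
    set μ := (Finset.range (n+2)).inf' Finset.nonempty_range_add_one f with hmu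
    have ihA' : S1 - I1 ≤ (t (n+1) - t 1) ^ n * A := ihA
    have ihB' : S0 - I0 ≤ (t n - t 0) ^ n * (-B) := by
      have : -I0 - -S0 ≤ (t n - t 0) ^ n * (-B) := ihB
      linarith
    have hc : t 0 < t (n+1) := hmono 0 (n+1) (by omega) le_rfl
    have hc1 : t 1 < t (n+1) := hmono 1 (n+1) (by omega) le_rfl
    have hc0 : t 0 < t n := hmono 0 n (by omega) (by omega)
    have ht01 : t 0 < t 1 := hmono 0 1 (by omega) (by omega)
    have htn : t n < t (n+1) := hmono n (n+1) (by omega) le_rfl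
    have hS1I1 : I1 ≤ S1 := inf'_le_sup'' _ _ _
    have hS0I0 : I0 ≤ S0 := inf'_le_sup'' _ _ _
    have hApos : 0 ≤ A := by
      by_contra hcon
      push_neg at hcon
      have h1 : (t (n+1) - t 1) ^ n * A < 0 :=
        mul_neg_of_pos_of_neg (pow_pos (by linarith) n) hcon
      linarith
    have hBpos : 0 ≤ -B := by
      by_contra hcon
      push_neg at hcon
      have h1 : (t n - t 0) ^ n * (-B) < 0 :=
        mul_neg_of_pos_of_neg (pow_pos (by linarith) n) hcon
      linarith
    have hrec := divDiff_rec n t g (fun i j hij hj => hmono i j hij hj)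
    -- bounds on sup/inf
    have hMle : M ≤ S0 ⊔ S1 := by
      apply Finset.sup'_le
      intro i hi
      simp only [Finset.mem_range] at hi
      rcases Nat.lt_or_ge i (n+1) with h | h
      · exact le_trans (Finset.le_sup' f (Finset.mem_range.2 h)) le_sup_left
      · have : i = n + 1 := by omega
        subst this
        refine le_trans ?_ le_sup_right
        exact Finset.le_sup' (fun i => g (t (i+1))) (Finset.mem_range.2 (show n < n+1 by omega))
    have hmule : I0 ≤ μ := by
      apply Finset.le_inf'
      intro i hi
      simp only [Finset.mem_range] at hi
      rcases Nat.lt_or_ge i (n+1) with h | h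
      · exact Finset.inf'_le f (Finset.mem_range.2 h)
      · have : i = n + 1 := by omega
        subst this
        have h1 : I0 ≤ f n := Finset.inf'_le f (Finset.mem_range.2 (show n < n+1 by omega))
        have h2 : f n ≤ f (n+1) := by
          have := hg (n+1) (by omega) le_rfl
          simpa using this
        linarith
    have hI1S0 : I1 ≤ S0 := by
      have h1 : I1 ≤ g (t 1) :=
        Finset.inf'_le (fun i => g (t (i+1))) (Finset.mem_range.2 (show 0 < n+1 by omega))
      have h2 : f 1 ≤ S0 := Finset.le_sup' f (Finset.mem_range.2 (show 1 < n+1 by omega))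
      exact le_trans h1 h2
    -- chain
    have step1 : (t (n+1) - t 1) ^ n * A ≤ (t (n+1) - t 0) ^ n * A :=
      mul_le_mul_of_nonneg_right (pow_le_pow_left₀ (by linarith) (by linarith) n) hApos
    have step2 : (t n - t 0) ^ n * (-B) ≤ (t (n+1) - t 0) ^ n * (-B) :=
      mul_le_mul_of_nonneg_right (pow_le_pow_left₀ (by linarith) (by linarith) n) hBpos
    have hfinal : (t (n+1) - t 0) ^ (n+1) * divDiff (n+1) t g
        = (t (n+1) - t 0) ^ n * A + (t (n+1) - t 0) ^ n * (-B) := by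
      rw [pow_succ]
      calc (t (n+1) - t 0) ^ n * (t (n+1) - t 0) * divDiff (n+1) t g
          = (t (n+1) - t 0) ^ n * ((t (n+1) - t 0) * divDiff (n+1) t g) := by ring
        _ = (t (n+1) - t 0) ^ n * (A - B) := by rw [hrec]
        _ = (t (n+1) - t 0) ^ n * A + (t (n+1) - t 0) ^ n * (-B) := by ring
    rw [hfinal]
    rcases le_total S0 S1 with h | h
    · have : M ≤ S1 := le_trans hMle (by simp [h])
      linarith
    · have : M ≤ S0 := le_trans hMle (by simp [h])
      linarith

theorem stmt1 (m : ℕ) (hm : 1 ≤ m) (t : ℕ → ℝ) (g : ℝ → ℝ)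
    (ht : ∀ i < m, t i < t (i + 1))
    (hg : ∀ i, 1 ≤ i → i ≤ m → 0 ≤ (-1 : ℝ) ^ (m - i) * (g (t i) - g (t (i - 1)))) :
    (Finset.range (m + 1)).sup' Finset.nonempty_range_add_one (fun i => g (t i)) -
      (Finset.range (m + 1)).inf' Finset.nonempty_range_add_one (fun i => g (t i)) ≤
    (t m - t 0) ^ m * |divDiff m t g| := by
  have h := key m hm t g ht hg
  have hc : 0 ≤ (t m - t 0) ^ m :=
    le_of_lt (pow_pos (sub_pos.2 (tmono m t ht 0 m (by omega) le_rfl)) m)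
  calc _ ≤ (t m - t 0) ^ m * divDiff m t g := h
    _ ≤ (t m - t 0) ^ m * |divDiff m t g| :=
        mul_le_mul_of_nonneg_left (le_abs_self _) hc
end

section
/- Let 0 ≤ l < m, let f be l times continuously differentiable on [a,b], and let x_0, ..., x_m ∈ [a,b] be distinct. Then |[x_0, ..., x_m; f]| ≤ (‖f^{(l)}‖_{[a,b]} / l!) · ∑_{j=l}^m 1 / ∏_{i=l, i≠j}^m |x_j − x_i|. -/
open Set Finset Polynomial

lemma iterRolle : ∀ (n : ℕ) (g : ℝ → ℝ) (a b : ℝ), a < b →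
    ContDiffOn ℝ n g (Set.Icc a b) → ∀ (y : ℕ → ℝ), (∀ i ≤ n, y i ∈ Set.Icc a b) →
    (∀ i j, i < j → j ≤ n → y i < y j) → (∀ i ≤ n, g (y i) = 0) →
    ∃ ξ ∈ Set.Icc a b, iteratedDerivWithin n g (Set.Icc a b) ξ = 0 := by
  intro n
  induction n with
  | zero =>
    intro g a b hab hg y hy hmono hz
    exact ⟨y 0, hy 0 le_rfl, by simpa using hz 0 le_rfl⟩
  | succ n IH =>
    intro g a b hab hg y hy hmono hz
    have hud : UniqueDiffOn ℝ (Set.Icc a b) := uniqueDiffOn_Icc hab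
    have H : ∀ i, ∃ c, i ≤ n → c ∈ Set.Ioo (y i) (y (i + 1)) ∧ deriv g c = 0 := by
      intro i
      by_cases hi : i ≤ n
      · have hlt : y i < y (i + 1) := hmono i (i + 1) (Nat.lt_succ_self i) (by omega)
        have hcont : ContinuousOn g (Set.Icc (y i) (y (i + 1))) :=
          (hg.continuousOn).mono (Set.Icc_subset_Icc (hy i (by omega)).1 (hy (i + 1) (by omega)).2)
        have heq : g (y i) = g (y (i + 1)) := by rw [hz i (by omega), hz (i + 1) (by omega)]
        obtain ⟨c, hc, hc0⟩ := exists_deriv_eq_zero hlt hcont heq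
        exact ⟨c, fun _ => ⟨hc, hc0⟩⟩
      · exact ⟨0, fun h => absurd h hi⟩
    choose z hzz using H
    have hzIoo : ∀ i ≤ n, z i ∈ Set.Ioo (y i) (y (i + 1)) := fun i hi => (hzz i hi).1
    have hzab : ∀ i ≤ n, z i ∈ Set.Ioo a b := by
      intro i hi
      obtain ⟨h1, h2⟩ := hzIoo i hi
      exact ⟨lt_of_le_of_lt (hy i (by omega)).1 h1, lt_of_lt_of_le h2 (hy (i + 1) (by omega)).2⟩
    have hG : ContDiffOn ℝ n (derivWithin g (Set.Icc a b)) (Set.Icc a b) :=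
      hg.derivWithin hud (by exact_mod_cast le_of_eq (by push_cast; ring))
    have hGz : ∀ i ≤ n, derivWithin g (Set.Icc a b) (z i) = 0 := by
      intro i hi
      rw [derivWithin_of_mem_nhds (Icc_mem_nhds (hzab i hi).1 (hzab i hi).2)]
      exact (hzz i hi).2
    have hzmono : ∀ i j, i < j → j ≤ n → z i < z j := by
      intro i j hij hj
      have h1 : z i < y (i + 1) := (hzIoo i (by omega)).2
      have h2 : y j < z j := (hzIoo j hj).1
      rcases eq_or_lt_of_le (Nat.succ_le_of_lt hij) with h | h
      · subst h; exact h1.trans h2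
      · exact h1.trans ((hmono (i + 1) j h (by omega)).trans h2)
    obtain ⟨ξ, hξ, hξ0⟩ := IH (derivWithin g (Set.Icc a b)) a b hab hG z
      (fun i hi => Set.Ioo_subset_Icc_self (hzab i hi)) hzmono hGz
    exact ⟨ξ, hξ, by rw [iteratedDerivWithin_succ']; exact hξ0⟩

lemma polyIDW (n : ℕ) (p : Polynomial ℝ) (s : Set ℝ) (hs : UniqueDiffOn ℝ s) :
    ∀ x ∈ s, iteratedDerivWithin n (fun y => p.eval y) s x =
      (Polynomial.derivative^[n] p).eval x := by
  induction n with
  | zero => intro x hx; simp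
  | succ n IH =>
    intro x hx
    rw [iteratedDerivWithin_succ]
    have : derivWithin (iteratedDerivWithin n (fun y => p.eval y) s) s x =
        derivWithin (fun y => (Polynomial.derivative^[n] p).eval y) s x :=
      derivWithin_congr IH (IH x hx)
    rw [this, Function.iterate_succ_apply']
    exact ((Polynomial.hasDerivAt (derivative^[n] p) x).hasDerivWithinAt).derivWithin (hs x hx)

lemma partialFractions (s : Finset ℕ) (hs : s.Nonempty) (v : ℕ → ℝ)
    (hinj : Set.InjOn v s) (t : ℝ) (ht : ∀ j ∈ s, t ≠ v j) :
    ∑ j ∈ s, 1 / ((t - v j) * ∏ k ∈ s.erase j, (v j - v k)) =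
      1 / ∏ j ∈ s, (t - v j) := by
  have hone := Lagrange.sum_basis hinj hs
  have heval : ∑ j ∈ s, Polynomial.eval t (Lagrange.basis s v j) = 1 := by
    have := congrArg (Polynomial.eval t) hone
    simpa [Polynomial.eval_finset_sum] using this
  have hterm : ∀ j ∈ s, Polynomial.eval t (Lagrange.basis s v j) =
      (∏ k ∈ s, (t - v k)) / ((t - v j) * ∏ k ∈ s.erase j, (v j - v k)) := by
    intro j hj
    rw [Lagrange.basis, Polynomial.eval_prod]
    have : ∀ k ∈ s.erase j, Polynomial.eval t (Lagrange.basisDivisor (v j) (v k)) =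
        (t - v k) * (v j - v k)⁻¹ := by
      intro k hk
      rw [Lagrange.basisDivisor]
      simp [mul_comm]
    rw [Finset.prod_congr rfl this, Finset.prod_mul_distrib, Finset.prod_inv_distrib]
    rw [← Finset.mul_prod_erase s (fun k => t - v k) hj]
    have h1 : ∏ k ∈ s.erase j, (t - v k) ≠ 0 := by
      apply Finset.prod_ne_zero_iff.mpr
      intro k hk
      exact sub_ne_zero_of_ne (ht k (Finset.mem_of_mem_erase hk))
    have h2 : ∏ k ∈ s.erase j, (v j - v k) ≠ 0 := by
      apply Finset.prod_ne_zero_iff.mpr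
      intro k hk
      exact sub_ne_zero_of_ne fun h => (Finset.ne_of_mem_erase hk).symm
        (hinj hj (Finset.mem_of_mem_erase hk) h)
    have h3 : t - v j ≠ 0 := sub_ne_zero_of_ne (ht j hj)
    field_simp
  rw [Finset.sum_congr rfl hterm] at heval
  have heval' : (∏ j ∈ s, (t - v j)) *
      ∑ j ∈ s, 1 / ((t - v j) * ∏ k ∈ s.erase j, (v j - v k)) = 1 := by
    rw [Finset.mul_sum, Finset.sum_congr rfl
      (fun j (hj : j ∈ s) => mul_one_div (∏ k ∈ s, (t - v k))
        ((t - v j) * ∏ k ∈ s.erase j, (v j - v k))), heval]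
  rw [mul_comm] at heval'
  exact eq_one_div_of_mul_eq_one_left heval'

lemma contDiff_polyEval (p : Polynomial ℝ) (n : ℕ∞) : ContDiff ℝ n fun x => p.eval x := by
  have h : (fun x : ℝ => p.eval x) =
      fun x => ∑ i ∈ Finset.range (p.natDegree + 1), p.coeff i * x ^ i :=
    funext fun x => Polynomial.eval_eq_sum_range x
  rw [h]
  exact ContDiff.sum fun i _ => contDiff_const.mul (contDiff_id.pow i)

lemma meanValueBound (l : ℕ) (a b : ℝ) (hab : a < b) (f : ℝ → ℝ)
    (hf : ContDiffOn ℝ l f (Set.Icc a b)) (M : ℝ)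
    (hM : ∀ y ∈ Set.Icc a b, |iteratedDerivWithin l f (Set.Icc a b) y| ≤ M)
    (t : ℕ → ℝ) (ht : ∀ i ≤ l, t i ∈ Set.Icc a b)
    (htd : ∀ i ≤ l, ∀ j ≤ l, i ≠ j → t i ≠ t j) :
    |divDiff l t f| ≤ M / l.factorial := by
  classical
  have hud : UniqueDiffOn ℝ (Set.Icc a b) := uniqueDiffOn_Icc hab
  set s : Finset ℕ := Finset.range (l + 1) with hsdef
  have hprodne : ∀ i ∈ s, (∏ j ∈ s.erase i, (t i - t j)) ≠ 0 := by
    intro i hi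
    refine Finset.prod_ne_zero_iff.mpr fun j hj => sub_ne_zero_of_ne ?_
    have hji := Finset.ne_of_mem_erase hj
    have hjs := Finset.mem_of_mem_erase hj
    exact htd i (by simpa [hsdef, Nat.lt_succ_iff] using hi) j
      (by simpa [hsdef, Nat.lt_succ_iff] using hjs) (Ne.symm hji)
  set p : Polynomial ℝ := ∑ i ∈ s, Polynomial.C
      (f (t i) / ∏ j ∈ s.erase i, (t i - t j)) * ∏ j ∈ s.erase i, (X - Polynomial.C (t j))
    with hpdef
  have hmonic : ∀ i : ℕ, (∏ j ∈ s.erase i, (X - Polynomial.C (t j))).Monic :=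
    fun i => monic_prod_of_monic _ _ fun j _ => monic_X_sub_C (t j)
  have hdegq : ∀ i ∈ s, (∏ j ∈ s.erase i, (X - Polynomial.C (t j))).natDegree = l := by
    intro i hi
    rw [Polynomial.natDegree_prod_of_monic _ _ fun j _ => monic_X_sub_C (t j)]
    simp [Finset.card_erase_of_mem (show i ∈ Finset.range (l + 1) from hi), hsdef]
  have hdeg : p.natDegree ≤ l := by
    refine Polynomial.natDegree_sum_le_of_forall_le _ _ fun i hi => ?_
    exact le_trans (Polynomial.natDegree_C_mul_le _ _) (le_of_eq (hdegq i hi))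
  have hcoeff : p.coeff l = divDiff l t f := by
    rw [hpdef, Polynomial.finset_sum_coeff, divDiff]
    refine Finset.sum_congr rfl fun i hi => ?_
    rw [Polynomial.coeff_C_mul]
    have : (∏ j ∈ s.erase i, (X - Polynomial.C (t j))).coeff l = 1 := by
      have := (hmonic i).coeff_natDegree
      rwa [hdegq i hi] at this
    rw [this, mul_one]
  have hevalp : ∀ k ∈ s, p.eval (t k) = f (t k) := by
    intro k hk
    rw [hpdef, Polynomial.eval_finset_sum]
    rw [Finset.sum_eq_single k]
    · rw [Polynomial.eval_mul, Polynomial.eval_C, Polynomial.eval_prod]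
      simp only [Polynomial.eval_sub, Polynomial.eval_X, Polynomial.eval_C]
      exact div_mul_cancel₀ _ (hprodne k hk)
    · intro i hi hik
      rw [Polynomial.eval_mul, Polynomial.eval_prod]
      have : ∏ j ∈ s.erase i, Polynomial.eval (t k) (X - Polynomial.C (t j)) = 0 := by
        refine Finset.prod_eq_zero (Finset.mem_erase.mpr ⟨Ne.symm hik, hk⟩) ?_
        simp
      rw [this, mul_zero]
    · intro h; exact absurd hk h
  -- the function g = f - p
  set g : ℝ → ℝ := fun y => f y - p.eval y with hgdef
  have hgc : ContDiffOn ℝ l g (Set.Icc a b) :=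
    hf.sub ((contDiff_polyEval p l).contDiffOn)
  -- sorted knots
  set S : Finset ℝ := s.image t with hSdef
  have hinj : Set.InjOn t s := by
    intro i hi j hj hij
    by_contra hne
    exact htd i (by simpa [hsdef, Nat.lt_succ_iff] using hi) j
      (by simpa [hsdef, Nat.lt_succ_iff] using hj) hne hij
  have hScard : S.card = l + 1 := by
    rw [hSdef, Finset.card_image_of_injOn hinj, hsdef, Finset.card_range]
  set y : ℕ → ℝ := fun i => if h : i < l + 1 then (S.orderEmbOfFin hScard ⟨i, h⟩ : ℝ) else 0
    with hydef
  have hyS : ∀ i ≤ l, y i ∈ S := by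
    intro i hi
    rw [hydef]
    simp only [dif_pos (Nat.lt_succ_of_le hi)]
    exact Finset.orderEmbOfFin_mem S hScard _
  have hyt : ∀ i ≤ l, ∃ k ≤ l, y i = t k := by
    intro i hi
    obtain ⟨k, hk, hkt⟩ := Finset.mem_image.mp (hyS i hi)
    exact ⟨k, by simpa [hsdef, Nat.lt_succ_iff] using hk, hkt.symm⟩
  have hyab : ∀ i ≤ l, y i ∈ Set.Icc a b := by
    intro i hi
    obtain ⟨k, hk, hkt⟩ := hyt i hi
    rw [hkt]; exact ht k hk
  have hymono : ∀ i j, i < j → j ≤ l → y i < y j := by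
    intro i j hij hj
    have hi' : i < l + 1 := by omega
    have hj' : j < l + 1 := by omega
    rw [hydef]
    simp only [dif_pos hi', dif_pos hj']
    exact (S.orderEmbOfFin hScard).strictMono (show (⟨i, hi'⟩ : Fin (l+1)) < ⟨j, hj'⟩ from hij)
  have hyz : ∀ i ≤ l, g (y i) = 0 := by
    intro i hi
    obtain ⟨k, hk, hkt⟩ := hyt i hi
    rw [hkt, hgdef]
    simp only
    rw [hevalp k (by simp [hsdef, Nat.lt_succ_iff, hk]), sub_self]
  obtain ⟨ξ, hξab, hξ0⟩ := iterRolle l g a b hab hgc y hyab hymono hyz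
  -- compute iterated derivative of g
  have hsplit : iteratedDerivWithin l g (Set.Icc a b) ξ =
      iteratedDerivWithin l f (Set.Icc a b) ξ -
        iteratedDerivWithin l (fun y => p.eval y) (Set.Icc a b) ξ :=
    iteratedDerivWithin_sub hξab hud (hf.contDiffWithinAt hξab) ((contDiff_polyEval p l).contDiffOn.contDiffWithinAt hξab)
  have hpoly : iteratedDerivWithin l (fun y => p.eval y) (Set.Icc a b) ξ =
      (l.factorial : ℝ) * divDiff l t f := by
    rw [polyIDW l p _ hud ξ hξab]
    have hd0 : (Polynomial.derivative^[l] p).natDegree = 0 := by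
      have := p.natDegree_iterate_derivative l
      omega
    obtain ⟨c, hc⟩ := Polynomial.natDegree_eq_zero.mp hd0
    have hcval : c = (Polynomial.derivative^[l] p).coeff 0 := by rw [← hc]; simp
    rw [← hc, Polynomial.eval_C, hcval, Polynomial.coeff_iterate_derivative, zero_add,
      Nat.descFactorial_self, hcoeff]
    simp [mul_comm]
  rw [hsplit, hpoly] at hξ0
  have hfl : (l.factorial : ℝ) > 0 := by positivity
  have : divDiff l t f = iteratedDerivWithin l f (Set.Icc a b) ξ / l.factorial := by
    field_simp
    linarith [hξ0]
  rw [this, abs_div, abs_of_pos hfl]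
  gcongr
  exact hM ξ hξab

theorem stmt4 (l m : ℕ) (hlm : l < m) (a b : ℝ) (hab : a < b) (f : ℝ → ℝ)
    (hf : ContDiffOn ℝ l f (Set.Icc a b))
    (x : ℕ → ℝ) (hx : ∀ i ≤ m, x i ∈ Set.Icc a b)
    (hdist : ∀ i ≤ m, ∀ j ≤ m, i ≠ j → x i ≠ x j)
    (M : ℝ) (hM : ∀ y ∈ Set.Icc a b, |iteratedDerivWithin l f (Set.Icc a b) y| ≤ M) :
    |divDiff m x f| ≤ (M / Nat.factorial l) *
      ∑ j ∈ Finset.Icc l m, 1 / ∏ i ∈ (Finset.Icc l m).erase j, |x j - x i| := by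
  classical
  set yy : ℕ → ℕ → ℝ := fun j k => if k < l then x k else x j with hyydef
  set B : ℕ → ℝ := fun i => ∏ k ∈ (Finset.range l).erase i, (x i - x k) with hBdef
  set P : ℕ → ℝ := fun i => ∏ j ∈ Finset.Icc l m, (x i - x j) with hPdef
  set A : ℕ → ℝ := fun j => ∏ k ∈ Finset.range l, (x j - x k) with hAdef
  set D : ℕ → ℝ := fun j => ∏ i ∈ (Finset.Icc l m).erase j, (x j - x i) with hDdef
  have hsplit : Finset.range (m + 1) = Finset.range l ∪ Finset.Icc l m := by
    ext k; simp [Nat.lt_succ_iff]; omega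
  have hdisj : Disjoint (Finset.range l) (Finset.Icc l m) := by
    simp only [Finset.disjoint_left, Finset.mem_range, Finset.mem_Icc]
    omega
  -- Step 1: split divDiff m
  have EQ1 : divDiff m x f = (∑ i ∈ Finset.range l, f (x i) / (B i * P i)) +
      ∑ j ∈ Finset.Icc l m, f (x j) / (A j * D j) := by
    rw [divDiff, hsplit, Finset.sum_union hdisj]
    congr 1
    · refine Finset.sum_congr rfl fun i hi => ?_
      have h1 : (Finset.range l ∪ Finset.Icc l m).erase i =
          (Finset.range l).erase i ∪ Finset.Icc l m := by
        have : i < l := Finset.mem_range.mp hi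
        ext k
        simp only [Finset.mem_erase, Finset.mem_union, Finset.mem_range, Finset.mem_Icc]
        omega
      rw [h1, Finset.prod_union (Finset.disjoint_of_subset_left (Finset.erase_subset _ _) hdisj)]
    · refine Finset.sum_congr rfl fun j hj => ?_
      have h1 : (Finset.range l ∪ Finset.Icc l m).erase j =
          Finset.range l ∪ (Finset.Icc l m).erase j := by
        obtain ⟨hj1, hj2⟩ := Finset.mem_Icc.mp hj
        ext k
        simp only [Finset.mem_erase, Finset.mem_union, Finset.mem_range, Finset.mem_Icc]
        omega
      rw [h1, Finset.prod_union (Finset.disjoint_of_subset_right (Finset.erase_subset _ _) hdisj)]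
  -- Step 2: expand divDiff l (yy j)
  have hlnotrange : l ∉ Finset.range l := by simp
  have EQ2 : ∀ j ∈ Finset.Icc l m, divDiff l (yy j) f =
      f (x j) / A j + ∑ i ∈ Finset.range l, f (x i) / ((x i - x j) * B i) := by
    intro j hj
    rw [divDiff, Finset.range_add_one, Finset.sum_insert hlnotrange]
    congr 1
    · rw [Finset.erase_insert hlnotrange]
      have h1 : yy j l = x j := by simp [hyydef]
      rw [h1]
      congr 1
      refine Finset.prod_congr rfl fun k hk => ?_
      have : k < l := Finset.mem_range.mp hk
      simp [hyydef, this]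
    · refine Finset.sum_congr rfl fun i hi => ?_
      have hil : i < l := Finset.mem_range.mp hi
      rw [Finset.erase_insert_of_ne (by omega : l ≠ i),
        Finset.prod_insert (by simp : l ∉ (Finset.range l).erase i)]
      have h1 : yy j i = x i := by simp [hyydef, hil]
      have h2 : yy j l = x j := by simp [hyydef]
      rw [h1, h2]
      congr 1
      congr 1
      refine Finset.prod_congr rfl fun k hk => ?_
      have : k < l := Finset.mem_range.mp (Finset.mem_of_mem_erase hk)
      simp [hyydef, this]
  -- Step 3: the decomposition identity
  have hPF : ∀ i ∈ Finset.range l,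
      ∑ j ∈ Finset.Icc l m, 1 / ((x i - x j) * D j) = 1 / P i := by
    intro i hi
    have hil : i < l := Finset.mem_range.mp hi
    refine partialFractions _ ⟨l, by simp [Finset.mem_Icc]; omega⟩ x ?_ (x i) ?_
    · intro u hu v hv huv
      simp only [Finset.coe_Icc, Set.mem_Icc] at hu hv
      by_contra hne
      exact hdist u hu.2 v hv.2 hne huv
    · intro j hj
      obtain ⟨hj1, hj2⟩ := Finset.mem_Icc.mp hj
      exact hdist i (by omega) j hj2 (by omega)
  have EQ3 : divDiff m x f = ∑ j ∈ Finset.Icc l m, divDiff l (yy j) f / D j := by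
    have hstep : ∑ j ∈ Finset.Icc l m, divDiff l (yy j) f / D j
        = (∑ j ∈ Finset.Icc l m, f (x j) / A j / D j) +
          ∑ j ∈ Finset.Icc l m, (∑ i ∈ Finset.range l,
            f (x i) / ((x i - x j) * B i)) / D j := by
      rw [← Finset.sum_add_distrib]
      refine Finset.sum_congr rfl fun j hj => ?_
      rw [EQ2 j hj, add_div]
    have h2 : ∑ j ∈ Finset.Icc l m, (∑ i ∈ Finset.range l,
        f (x i) / ((x i - x j) * B i)) / D j = ∑ i ∈ Finset.range l, f (x i) / (B i * P i) := by
      have : ∀ j ∈ Finset.Icc l m, (∑ i ∈ Finset.range l,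
          f (x i) / ((x i - x j) * B i)) / D j =
          ∑ i ∈ Finset.range l, (f (x i) / B i) * (1 / ((x i - x j) * D j)) := by
        intro j hj
        rw [Finset.sum_div]
        refine Finset.sum_congr rfl fun i hi => ?_
        simp only [div_eq_mul_inv, one_div, mul_inv]
        ring
      rw [Finset.sum_congr rfl this, Finset.sum_comm]
      refine Finset.sum_congr rfl fun i hi => ?_
      rw [← Finset.mul_sum, hPF i hi, div_mul_div_comm, mul_one]
    rw [EQ1, hstep, h2, add_comm]
    congr 1
    refine Finset.sum_congr rfl fun j hj => ?_
    rw [div_div]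
  -- Step 4: bound
  have hyyab : ∀ j ∈ Finset.Icc l m, ∀ i ≤ l, yy j i ∈ Set.Icc a b := by
    intro j hj i hi
    obtain ⟨hj1, hj2⟩ := Finset.mem_Icc.mp hj
    by_cases h : i < l <;> simp only [hyydef, h, if_true, if_false] <;>
      [exact hx i (by omega); exact hx j hj2]
  have hyyd : ∀ j ∈ Finset.Icc l m, ∀ i ≤ l, ∀ k ≤ l, i ≠ k → yy j i ≠ yy j k := by
    intro j hj i hi k hk hik
    obtain ⟨hj1, hj2⟩ := Finset.mem_Icc.mp hj
    by_cases h1 : i < l <;> by_cases h2 : k < l <;>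
      simp only [hyydef, h1, h2, if_true, if_false]
    · exact hdist i (by omega) k (by omega) hik
    · exact hdist i (by omega) j hj2 (by omega)
    · exact hdist j hj2 k (by omega) (by omega)
    · omega
  have hbound : ∀ j ∈ Finset.Icc l m, |divDiff l (yy j) f| ≤ M / l.factorial :=
    fun j hj => meanValueBound l a b hab f hf M hM (yy j) (hyyab j hj) (hyyd j hj)
  have habsD : ∀ j ∈ Finset.Icc l m, |D j| = ∏ i ∈ (Finset.Icc l m).erase j, |x j - x i| :=
    fun j hj => Finset.abs_prod _ _
  calc |divDiff m x f| = |∑ j ∈ Finset.Icc l m, divDiff l (yy j) f / D j| := by rw [EQ3]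
    _ ≤ ∑ j ∈ Finset.Icc l m, |divDiff l (yy j) f / D j| := Finset.abs_sum_le_sum_abs _ _
    _ ≤ ∑ j ∈ Finset.Icc l m, (M / l.factorial) *
        (1 / ∏ i ∈ (Finset.Icc l m).erase j, |x j - x i|) := by
      refine Finset.sum_le_sum fun j hj => ?_
      rw [abs_div, habsD j hj, div_eq_mul_one_div]
      refine mul_le_mul_of_nonneg_right (hbound j hj) ?_
      positivity
    _ = (M / Nat.factorial l) *
        ∑ j ∈ Finset.Icc l m, 1 / ∏ i ∈ (Finset.Icc l m).erase j, |x j - x i| := by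
      rw [Finset.mul_sum]
end

section
/- Let a ≥ 0, real numbers t_0 < t_m, points x_1, ..., x_{m-1} ∈ (t_0, t_m), and let g be differentiable with g'(x) = a·∏_{i=1}^{m-1}(x - x_i). Then ∫_{t_0}^{t_m} |g'(x)| dx ≤ (a/m)·(t_m - t_0)^m. -/
open intervalIntegral in
private lemma amgm_aux (s : Finset ℕ) (b : ℕ → ℝ) (hb : ∀ i ∈ s, 0 ≤ b i)
    (hs : s.card ≠ 0) :
    ∏ i ∈ s, b i ≤ (∑ i ∈ s, b i ^ s.card) / s.card := by
  set n := s.card with hn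
  have hn0 : (0:ℝ) < n := by positivity
  have key := Real.geom_mean_le_arith_mean_weighted s (fun _ => (n:ℝ)⁻¹)
    (fun i => b i ^ n) (fun i _ => inv_nonneg.2 (Nat.cast_nonneg _))
    (by simp [Finset.sum_const, ← hn, hn0.ne']) (fun i hi => pow_nonneg (hb i hi) n)
  have hlhs : ∏ i ∈ s, ((b i ^ n : ℝ)) ^ ((n:ℝ)⁻¹) = ∏ i ∈ s, b i := by
    refine Finset.prod_congr rfl fun i hi => ?_
    rw [← Real.rpow_natCast (b i) n, ← Real.rpow_mul (hb i hi),
      mul_inv_cancel₀ hn0.ne', Real.rpow_one]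
  rw [hlhs] at key
  calc ∏ i ∈ s, b i ≤ ∑ i ∈ s, (n:ℝ)⁻¹ * b i ^ n := key
    _ = (∑ i ∈ s, b i ^ n) / n := by
        rw [← Finset.mul_sum, inv_mul_eq_div]

private lemma int_abs_pow_aux (t0 tm c : ℝ) (n : ℕ) (hc : c ∈ Set.Icc t0 tm) :
    ∫ y in t0..tm, |y - c| ^ n ≤ (tm - t0) ^ (n + 1) / (n + 1) := by
  obtain ⟨hc1, hc2⟩ := hc
  have hcont : Continuous fun y : ℝ => |y - c| ^ n :=
    ((continuous_id.sub continuous_const).abs).pow n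
  have h1 : ∫ y in t0..c, |y - c| ^ n = (c - t0) ^ (n + 1) / (n + 1) := by
    have : ∫ y in t0..c, |y - c| ^ n = ∫ y in t0..c, (c - y) ^ n := by
      refine intervalIntegral.integral_congr fun y hy => ?_
      rw [Set.uIcc_of_le hc1] at hy
      rw [abs_of_nonpos (by linarith [hy.2]), neg_sub]
    rw [this, intervalIntegral.integral_comp_sub_left (fun x : ℝ => x ^ n) c]
    rw [integral_pow]
    simp
  have h2 : ∫ y in c..tm, |y - c| ^ n = (tm - c) ^ (n + 1) / (n + 1) := by
    have : ∫ y in c..tm, |y - c| ^ n = ∫ y in c..tm, (y - c) ^ n := by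
      refine intervalIntegral.integral_congr fun y hy => ?_
      rw [Set.uIcc_of_le hc2] at hy
      rw [abs_of_nonneg (by linarith [hy.1])]
    rw [this, intervalIntegral.integral_comp_sub_right (fun x : ℝ => x ^ n) c]
    rw [integral_pow]
    simp
  have hsplit : ∫ y in t0..tm, |y - c| ^ n =
      (∫ y in t0..c, |y - c| ^ n) + ∫ y in c..tm, |y - c| ^ n := by
    rw [intervalIntegral.integral_add_adjacent_intervals
      (hcont.intervalIntegrable _ _) (hcont.intervalIntegrable _ _)]
  rw [hsplit, h1, h2, ← add_div, div_le_div_iff_of_pos_right (by positivity)]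
  have := pow_add_pow_le (sub_nonneg.2 hc1) (sub_nonneg.2 hc2) (Nat.succ_ne_zero n)
  calc (c - t0) ^ (n+1) + (tm - c) ^ (n+1) ≤ ((c - t0) + (tm - c)) ^ (n+1) := this
    _ = (tm - t0) ^ (n+1) := by ring_nf

theorem stmt5 (m : ℕ) (hm : 1 ≤ m) (a t0 tm : ℝ) (ha : 0 ≤ a) (htt : t0 < tm)
    (x : ℕ → ℝ) (hx : ∀ i, 1 ≤ i → i ≤ m - 1 → x i ∈ Set.Ioo t0 tm)
    (g : ℝ → ℝ)
    (hg : ∀ y : ℝ, HasDerivAt g (a * ∏ i ∈ Finset.Icc 1 (m - 1), (y - x i)) y) :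
    ∫ y in t0..tm, |deriv g y| ≤ (a / m) * (tm - t0) ^ m := by
  have hderiv : ∀ y, deriv g y = a * ∏ i ∈ Finset.Icc 1 (m - 1), (y - x i) :=
    fun y => (hg y).deriv
  set s : Finset ℕ := Finset.Icc 1 (m - 1) with hs
  have hcard : s.card = m - 1 := by simp [hs]
  have habs : ∀ y, |deriv g y| = a * ∏ i ∈ s, |y - x i| := by
    intro y
    rw [hderiv y, abs_mul, abs_of_nonneg ha, Finset.abs_prod]
  rcases eq_or_lt_of_le hm with hm1 | hm2
  · -- m = 1
    have hm1' : m = 1 := hm1.symm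
    subst hm1'
    have hsempty : s = ∅ := by simp [hs]
    have : ∀ y, |deriv g y| = a := by
      intro y; rw [habs y, hsempty]; simp
    rw [intervalIntegral.integral_congr (fun y _ => this y)]
    simp only [intervalIntegral.integral_const, smul_eq_mul]
    rw [pow_one]
    nlinarith [sub_pos.2 htt]
  · -- m ≥ 2
    set n := m - 1 with hn
    have hn1 : 1 ≤ n := by omega
    have hmn : m = n + 1 := by omega
    have hn0 : (0:ℝ) < n := by exact_mod_cast hn1
    have hcard' : s.card = n := hcard
    -- continuity / integrability facts
    have hcont1 : Continuous fun y : ℝ => a * ∏ i ∈ s, |y - x i| := by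
      apply continuous_const.mul
      exact continuous_finset_prod _ fun i _ => (continuous_id.sub continuous_const).abs
    have hcont2 : Continuous fun y : ℝ => (a / n) * ∑ i ∈ s, |y - x i| ^ n := by
      apply continuous_const.mul
      exact continuous_finset_sum _ fun i _ =>
        ((continuous_id.sub continuous_const).abs).pow n
    have step1 : ∫ y in t0..tm, |deriv g y| = ∫ y in t0..tm, a * ∏ i ∈ s, |y - x i| :=
      intervalIntegral.integral_congr (fun y _ => habs y)
    have step2 : (∫ y in t0..tm, a * ∏ i ∈ s, |y - x i|) ≤
        ∫ y in t0..tm, (a / n) * ∑ i ∈ s, |y - x i| ^ n := by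
      apply intervalIntegral.integral_mono_on htt.le
        (hcont1.intervalIntegrable _ _) (hcont2.intervalIntegrable _ _)
      intro y _
      have := amgm_aux s (fun i => |y - x i|) (fun i _ => abs_nonneg _)
        (by rw [hcard']; omega)
      rw [hcard'] at this
      calc a * ∏ i ∈ s, |y - x i| ≤ a * ((∑ i ∈ s, |y - x i| ^ n) / n) :=
            mul_le_mul_of_nonneg_left this ha
        _ = (a / n) * ∑ i ∈ s, |y - x i| ^ n := by ring
    have step3 : (∫ y in t0..tm, (a / n) * ∑ i ∈ s, |y - x i| ^ n) =
        (a / n) * ∑ i ∈ s, ∫ y in t0..tm, |y - x i| ^ n := by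
      rw [intervalIntegral.integral_const_mul]
      congr 1
      exact intervalIntegral.integral_finset_sum fun i _ =>
        (((continuous_id.sub continuous_const).abs).pow n).intervalIntegrable _ _
    have step4 : ∀ i ∈ s, (∫ y in t0..tm, |y - x i| ^ n) ≤ (tm - t0) ^ m / m := by
      intro i hi
      have hxi : x i ∈ Set.Icc t0 tm := by
        have := hx i (by simpa [hs, hn] using (Finset.mem_Icc.1 hi).1)
          (by simpa [hs, hn] using (Finset.mem_Icc.1 hi).2)
        exact ⟨this.1.le, this.2.le⟩
      have := int_abs_pow_aux t0 tm (x i) n hxi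
      calc (∫ y in t0..tm, |y - x i| ^ n) ≤ (tm - t0) ^ (n + 1) / (n + 1) := this
        _ = (tm - t0) ^ m / m := by rw [hmn]; push_cast; ring_nf
    have step5 : (∑ i ∈ s, ∫ y in t0..tm, |y - x i| ^ n) ≤ n * ((tm - t0) ^ m / m) := by
      calc (∑ i ∈ s, ∫ y in t0..tm, |y - x i| ^ n)
          ≤ ∑ _i ∈ s, (tm - t0) ^ m / m := Finset.sum_le_sum step4
        _ = n * ((tm - t0) ^ m / m) := by
            rw [Finset.sum_const, hcard']; simp [nsmul_eq_mul]
    rw [step1]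
    calc (∫ y in t0..tm, a * ∏ i ∈ s, |y - x i|)
        ≤ ∫ y in t0..tm, (a / n) * ∑ i ∈ s, |y - x i| ^ n := step2
      _ = (a / n) * ∑ i ∈ s, ∫ y in t0..tm, |y - x i| ^ n := step3
      _ ≤ (a / n) * (n * ((tm - t0) ^ m / m)) := by
          apply mul_le_mul_of_nonneg_left step5 (by positivity)
      _ = (a / m) * (tm - t0) ^ m := by
          field_simp
end

section
/- Let a ≥ 0, t_0 < t_m, x_1, ..., x_{m-1} ∈ (t_0, t_m), and let g be a polynomial with g'(x) = a·∏_{i=1}^{m-1}(x - x_i). Then for any points t_0 ≤ s_0 < s_1 < ... < s_m = t_m, one has max_{0≤i≤m} g(s_i) − min_{0≤i≤m} g(s_i) ≤ (a/m)·(t_m − t_0)^m. -/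
open intervalIntegral

/-- AM-GM: product of nonneg reals is at most (1/k) * sum of k-th powers. -/
lemma amgm_pow (s : Finset ℕ) (hs : s.Nonempty) (f : ℕ → ℝ) (hf : ∀ i ∈ s, 0 ≤ f i) :
    ∏ i ∈ s, f i ≤ (1 / (s.card : ℝ)) * ∑ i ∈ s, f i ^ (s.card : ℕ) := by
  have hk : (0:ℝ) < (s.card : ℝ) := by exact_mod_cast Finset.card_pos.2 hs
  have h := Real.geom_mean_le_arith_mean_weighted s (fun _ => 1 / (s.card : ℝ))
      (fun i => f i ^ (s.card : ℕ)) (fun i _ => one_div_nonneg.2 (Nat.cast_nonneg _))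
      (by rw [Finset.sum_const, nsmul_eq_mul]; field_simp) (fun i hi => pow_nonneg (hf i hi) _)
  calc ∏ i ∈ s, f i
      = ∏ i ∈ s, ((f i ^ (s.card : ℕ)) ^ ((1:ℝ) / (s.card : ℝ))) := by
        refine Finset.prod_congr rfl fun i hi => ?_
        rw [← Real.rpow_natCast (f i) s.card, ← Real.rpow_mul (hf i hi),
          mul_one_div, div_self hk.ne', Real.rpow_one]
    _ ≤ ∑ i ∈ s, (1 / (s.card : ℝ)) * f i ^ (s.card : ℕ) := h
    _ = (1 / (s.card : ℝ)) * ∑ i ∈ s, f i ^ (s.card : ℕ) := by rw [Finset.mul_sum]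

lemma integral_abs_pow_le (k : ℕ) (t0 tm c : ℝ) (h0 : t0 ≤ c) (h1 : c ≤ tm) :
    ∫ x in t0..tm, |x - c| ^ k ≤ (tm - t0) ^ (k+1) / (k+1) := by
  have hcont : Continuous fun x : ℝ => |x - c| ^ k :=
    ((continuous_id.sub continuous_const).abs).pow k
  have e1 : ∫ x in t0..c, |x - c| ^ k = (c - t0) ^ (k+1) / (k+1) := by
    have h := integral_pow_abs_sub_uIoc (a := c) (b := t0) (n := k)
    rw [Set.uIoc_of_ge h0] at h
    rw [intervalIntegral.integral_of_le h0, h, abs_of_nonpos (by linarith)]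
    rw [neg_sub]
  have e2 : ∫ x in c..tm, |x - c| ^ k = (tm - c) ^ (k+1) / (k+1) := by
    have h := integral_pow_abs_sub_uIoc (a := c) (b := tm) (n := k)
    rw [Set.uIoc_of_le h1] at h
    rw [intervalIntegral.integral_of_le h1, h, abs_of_nonneg (by linarith)]
  have e3 : ∫ x in t0..tm, |x - c| ^ k = (c - t0) ^ (k+1) / (k+1) + (tm - c) ^ (k+1) / (k+1) := by
    rw [← e1, ← e2]
    exact (intervalIntegral.integral_add_adjacent_intervals
      (hcont.intervalIntegrable _ _) (hcont.intervalIntegrable _ _)).symm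
  rw [e3, ← add_div]
  have hle : (c - t0) ^ (k+1) + (tm - c) ^ (k+1) ≤ (tm - t0) ^ (k+1) := by
    have := pow_add_pow_le (x := c - t0) (y := tm - c) (by linarith) (by linarith)
      (Nat.succ_ne_zero k)
    calc (c - t0) ^ (k+1) + (tm - c) ^ (k+1) ≤ ((c - t0) + (tm - c)) ^ (k+1) := this
      _ = (tm - t0) ^ (k+1) := by ring_nf
  have h4 : (0:ℝ) < (k:ℝ) + 1 := by positivity
  exact (div_le_div_iff_of_pos_right h4).2 hle

theorem stmt6 (m : ℕ) (hm : 1 ≤ m) (a t0 tm : ℝ) (ha : 0 ≤ a) (htt : t0 < tm)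
    (x : ℕ → ℝ) (hx : ∀ i, 1 ≤ i → i ≤ m - 1 → x i ∈ Set.Ioo t0 tm)
    (g : Polynomial ℝ)
    (hg : ∀ y : ℝ, (Polynomial.derivative g).eval y =
      a * ∏ i ∈ Finset.Icc 1 (m - 1), (y - x i))
    (s : ℕ → ℝ) (hs0 : t0 ≤ s 0) (hsm : s m = tm)
    (hsmono : ∀ i < m, s i < s (i + 1)) :
    (Finset.range (m + 1)).sup' Finset.nonempty_range_add_one (fun i => g.eval (s i)) -
      (Finset.range (m + 1)).inf' Finset.nonempty_range_add_one (fun i => g.eval (s i)) ≤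
    (a / m) * (tm - t0) ^ m := by
  have hcg : Continuous fun y : ℝ => (Polynomial.derivative g).eval y :=
    (Polynomial.derivative g).continuous
  have hcabs : Continuous fun y : ℝ => |(Polynomial.derivative g).eval y| := hcg.abs
  -- key integral bound
  have key : (∫ y in t0..tm, |(Polynomial.derivative g).eval y|) ≤ a / m * (tm - t0) ^ m := by
    rcases eq_or_lt_of_le hm with h1 | h2
    · -- m = 1
      subst h1
      have hempty : Finset.Icc 1 (1 - 1) = ∅ := rfl
      have habs : ∀ y : ℝ, |(Polynomial.derivative g).eval y| = a := by
        intro y; rw [hg, hempty, Finset.prod_empty, mul_one, abs_of_nonneg ha]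
      rw [intervalIntegral.integral_congr (fun y _ => habs y),
        intervalIntegral.integral_const, smul_eq_mul]
      norm_num [mul_comm]
    · -- m ≥ 2
      set k := m - 1 with hkdef
      have hk1 : 1 ≤ k := by omega
      have hmk : m = k + 1 := by omega
      have hkpos : (0:ℝ) < (k : ℝ) := by exact_mod_cast hk1
      have hmpos : (0:ℝ) < (m : ℝ) := by exact_mod_cast hm
      have hcard : (Finset.Icc 1 k).card = k := by
        rw [Nat.card_Icc]; omega
      have hne : (Finset.Icc 1 k).Nonempty := ⟨1, by simp [hk1]⟩
      -- pointwise bound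
      have hpt : ∀ y : ℝ, |(Polynomial.derivative g).eval y|
          ≤ a * ((1 / (k:ℝ)) * ∑ i ∈ Finset.Icc 1 k, |y - x i| ^ k) := by
        intro y
        rw [hg, abs_mul, abs_of_nonneg ha, Finset.abs_prod]
        refine mul_le_mul_of_nonneg_left ?_ ha
        have := amgm_pow (Finset.Icc 1 k) hne (fun i => |y - x i|)
          (fun i _ => abs_nonneg _)
        rwa [hcard] at this
      have hcontsum : Continuous fun y : ℝ =>
          a * ((1 / (k:ℝ)) * ∑ i ∈ Finset.Icc 1 k, |y - x i| ^ k) := by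
        refine continuous_const.mul (continuous_const.mul ?_)
        exact continuous_finset_sum _ fun i _ =>
          ((continuous_id.sub continuous_const).abs).pow k
      have hstep1 : (∫ y in t0..tm, |(Polynomial.derivative g).eval y|)
          ≤ ∫ y in t0..tm, a * ((1 / (k:ℝ)) * ∑ i ∈ Finset.Icc 1 k, |y - x i| ^ k) := by
        refine intervalIntegral.integral_mono_on htt.le (hcabs.intervalIntegrable _ _)
          (hcontsum.intervalIntegrable _ _) (fun y _ => hpt y)
      have hint : ∀ i : ℕ, IntervalIntegrable (fun y : ℝ => |y - x i| ^ k)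
          MeasureTheory.volume t0 tm := fun i =>
        (((continuous_id.sub continuous_const).abs).pow k).intervalIntegrable _ _
      have hstep2 : (∫ y in t0..tm, a * ((1 / (k:ℝ)) * ∑ i ∈ Finset.Icc 1 k, |y - x i| ^ k))
          = a * ((1 / (k:ℝ)) * ∑ i ∈ Finset.Icc 1 k, ∫ y in t0..tm, |y - x i| ^ k) := by
        rw [intervalIntegral.integral_const_mul, intervalIntegral.integral_const_mul,
          intervalIntegral.integral_finset_sum (fun i _ => hint i)]
      have hstep3 : ∑ i ∈ Finset.Icc 1 k, (∫ y in t0..tm, |y - x i| ^ k)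
          ≤ (k : ℝ) * ((tm - t0) ^ m / m) := by
        have : ∀ i ∈ Finset.Icc 1 k, (∫ y in t0..tm, |y - x i| ^ k)
            ≤ (tm - t0) ^ m / m := by
          intro i hi
          rw [Finset.mem_Icc] at hi
          obtain ⟨hxi1, hxi2⟩ := hx i hi.1 hi.2
          have := integral_abs_pow_le k t0 tm (x i) hxi1.le hxi2.le
          rw [hmk]
          push_cast
          push_cast at this
          exact this
        calc ∑ i ∈ Finset.Icc 1 k, (∫ y in t0..tm, |y - x i| ^ k)
            ≤ ∑ _i ∈ Finset.Icc 1 k, (tm - t0) ^ m / m := Finset.sum_le_sum this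
          _ = (k : ℝ) * ((tm - t0) ^ m / m) := by
              rw [Finset.sum_const, hcard, nsmul_eq_mul]
      calc (∫ y in t0..tm, |(Polynomial.derivative g).eval y|)
          ≤ a * ((1 / (k:ℝ)) * ∑ i ∈ Finset.Icc 1 k, ∫ y in t0..tm, |y - x i| ^ k) := by
            rw [← hstep2]; exact hstep1
        _ ≤ a * ((1 / (k:ℝ)) * ((k : ℝ) * ((tm - t0) ^ m / m))) := by
            refine mul_le_mul_of_nonneg_left (mul_le_mul_of_nonneg_left hstep3 (by positivity)) ha
        _ = a / m * (tm - t0) ^ m := by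
            field_simp
  -- s is monotone up to m, values in [t0, tm]
  have hmono : ∀ i j, i ≤ j → j ≤ m → s i ≤ s j := by
    intro i j hij hjm
    induction j with
    | zero => simp [Nat.le_zero.1 hij]
    | succ n ih =>
      rcases Nat.lt_or_ge i (n+1) with h | h
      · exact le_trans (ih (by omega) (by omega)) (hsmono n (by omega)).le
      · have : i = n + 1 := by omega
        simp [this]
  have hrng : ∀ i, i ≤ m → s i ∈ Set.Icc t0 tm := fun i hi =>
    ⟨le_trans hs0 (hmono 0 i (Nat.zero_le _) hi), hsm ▸ hmono i m hi le_rfl⟩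
  -- FTC
  have ftc : ∀ u v : ℝ, g.eval u - g.eval v = ∫ y in v..u, (Polynomial.derivative g).eval y := by
    intro u v
    rw [intervalIntegral.integral_deriv_eq_sub' (fun y => g.eval y)
      (funext fun y => Polynomial.deriv g)
      (fun y _ => g.differentiable.differentiableAt) (hcg.continuousOn)]
  -- oscillation bound
  have osc : ∀ w z : ℝ, w ∈ Set.Icc t0 tm → z ∈ Set.Icc t0 tm →
      g.eval w - g.eval z ≤ ∫ y in t0..tm, |(Polynomial.derivative g).eval y| := by
    intro w z hw hz
    have hbig : ∀ α β : ℝ, t0 ≤ α → α ≤ β → β ≤ tm →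
        (∫ y in α..β, |(Polynomial.derivative g).eval y|)
          ≤ ∫ y in t0..tm, |(Polynomial.derivative g).eval y| :=
      fun α β h1 h2 h3 =>
        intervalIntegral.integral_mono_interval h1 h2 h3
          (Filter.Eventually.of_forall fun y => abs_nonneg _)
          (hcabs.intervalIntegrable _ _)
    rcases le_total z w with hzw | hwz
    · calc g.eval w - g.eval z = ∫ y in z..w, (Polynomial.derivative g).eval y := ftc w z
        _ ≤ ∫ y in z..w, |(Polynomial.derivative g).eval y| :=
            intervalIntegral.integral_mono_on hzw (hcg.intervalIntegrable _ _)
              (hcabs.intervalIntegrable _ _) (fun y _ => le_abs_self _)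
        _ ≤ _ := hbig z w hz.1 hzw hw.2
    · calc g.eval w - g.eval z = ∫ y in z..w, (Polynomial.derivative g).eval y := ftc w z
        _ = ∫ y in w..z, -(Polynomial.derivative g).eval y := by
            rw [intervalIntegral.integral_neg, intervalIntegral.integral_symm]
        _ ≤ ∫ y in w..z, |(Polynomial.derivative g).eval y| :=
            intervalIntegral.integral_mono_on hwz
              ((hcg.neg).intervalIntegrable _ _)
              (hcabs.intervalIntegrable _ _) (fun y _ => neg_le_abs _)
        _ ≤ _ := hbig w z hw.1 hwz hz.2
  obtain ⟨p, hp, hsup⟩ := Finset.exists_mem_eq_sup' (Finset.nonempty_range_add_one (n := m))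
    (fun i => g.eval (s i))
  obtain ⟨q, hq, hinf⟩ := Finset.exists_mem_eq_inf' (Finset.nonempty_range_add_one (n := m))
    (fun i => g.eval (s i))
  rw [hsup, hinf]
  have hpm : p ≤ m := by
    have := Finset.mem_range.1 hp; omega
  have hqm : q ≤ m := by
    have := Finset.mem_range.1 hq; omega
  exact le_trans (osc (s p) (s q) (hrng p hpm) (hrng q hqm)) key
end

section
/- Let f : ℝ → ℝ be 2π-periodic and continuous, with 2s points y_1 < y_2 < ... < y_{2s} in a period such that (−1)^{i−1}f is nondecreasing on each [y_{i−1}, y_i] (with y_0 := y_{2s} − 2π). If f is continuously differentiable, then f'(x)·∏_{i=1}^{2s} sin((x − y_i)/2) ≥ 0 for all x ∈ ℝ. -/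
open Set Filter Topology

lemma myDerivNonneg {g : ℝ → ℝ} {a b x : ℝ} (hab : a < b)
    (hx : x ∈ Set.Icc a b) (hm : MonotoneOn g (Set.Icc a b))
    (hg : DifferentiableAt ℝ g x) : 0 ≤ deriv g x := by
  have hd : HasDerivAt g (deriv g x) x := hg.hasDerivAt
  rw [hasDerivAt_iff_tendsto_slope] at hd
  rcases lt_or_eq_of_le hx.2 with hxb | hxb
  · have h1 : Tendsto (slope g x) (𝓝[>] x) (𝓝 (deriv g x)) :=
      hd.mono_left (nhdsWithin_mono x fun t ht => ne_of_gt ht)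
    refine ge_of_tendsto h1 ?_
    filter_upwards [Ioo_mem_nhdsGT_of_mem ⟨le_refl x, hxb⟩] with t ht
    have hgt : g x ≤ g t := hm hx ⟨le_trans hx.1 ht.1.le, ht.2.le⟩ ht.1.le
    rw [slope_def_field]
    exact div_nonneg (by linarith) (by linarith [ht.1])
  · have hax : a < x := hxb ▸ hab
    have h1 : Tendsto (slope g x) (𝓝[<] x) (𝓝 (deriv g x)) :=
      hd.mono_left (nhdsWithin_mono x fun t ht => ne_of_lt ht)
    refine ge_of_tendsto h1 ?_
    filter_upwards [Ioo_mem_nhdsLT_of_mem ⟨hax, le_refl x⟩] with t ht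
    have hgt : g t ≤ g x := hm ⟨ht.1.le, le_trans ht.2.le hx.2⟩ hx ht.2.le
    rw [slope_def_field]
    have h2 : t - x < 0 := by linarith [ht.2]
    have h3 : g t - g x ≤ 0 := by linarith
    rw [div_nonneg_iff]
    right; exact ⟨h3, h2.le⟩


lemma myProdNeg {α : Type*} (t : Finset α) (g : α → ℝ) :
    ∏ i ∈ t, g i = (-1 : ℝ) ^ t.card * ∏ i ∈ t, (-(g i)) := by
  have h : ∏ i ∈ t, (-(g i)) = (-1 : ℝ) ^ t.card * ∏ i ∈ t, g i := by
    calc ∏ i ∈ t, (-(g i)) = ∏ i ∈ t, ((-1 : ℝ) * g i) := by simp only [neg_one_mul]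
      _ = (∏ _i ∈ t, (-1 : ℝ)) * ∏ i ∈ t, g i := Finset.prod_mul_distrib
      _ = (-1 : ℝ) ^ t.card * ∏ i ∈ t, g i := by rw [Finset.prod_const]
  rw [h, ← mul_assoc, ← mul_pow]
  norm_num

theorem stmt16 (s : ℕ) (hs : 1 ≤ s) (y : ℕ → ℝ) (f : ℝ → ℝ)
    (hy : ∀ i < 2 * s, y i < y (i + 1))
    (hyper : y (2 * s) = y 0 + 2 * Real.pi)
    (hfper : ∀ x : ℝ, f (x + 2 * Real.pi) = f x)
    (hmono : ∀ i, 1 ≤ i → i ≤ 2 * s →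
      MonotoneOn (fun x => (-1 : ℝ) ^ (i - 1) * f x) (Set.Icc (y (i - 1)) (y i)))
    (hf : ContDiff ℝ 1 f) :
    ∀ x : ℝ, 0 ≤ deriv f x * ∏ i ∈ Finset.Icc 1 (2 * s), Real.sin ((x - y i) / 2) := by
  have hdf : Differentiable ℝ f := hf.differentiable one_ne_zero
  have ymono : ∀ b ≤ 2 * s, ∀ a ≤ b, y a ≤ y b := by
    intro b hb
    induction b with
    | zero => intro a ha; simp [Nat.le_zero.mp ha]
    | succ n ih =>
      intro a ha
      rcases Nat.lt_or_ge a (n + 1) with h | h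
      · exact le_trans (ih (by omega) a (by omega)) (hy n (by omega)).le
      · have : a = n + 1 := le_antisymm ha h
        simp [this]
  -- key lemma on one period
  have key : ∀ x ∈ Set.Icc (y 0) (y (2 * s)),
      0 ≤ deriv f x * ∏ i ∈ Finset.Icc 1 (2 * s), Real.sin ((x - y i) / 2) := by
    intro x hx
    -- find interval index j
    have exj : ∀ n, 1 ≤ n → x ≤ y n →
        ∃ j, 1 ≤ j ∧ j ≤ n ∧ y (j - 1) ≤ x ∧ x ≤ y j := by
      intro n h1 hxn
      induction n with
      | zero => omega
      | succ m ih =>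
        rcases le_or_gt x (y m) with h | h
        · rcases Nat.eq_zero_or_pos m with rfl | hm
          · exact ⟨1, le_refl 1, le_refl 1, by simpa using hx.1,
              le_trans h (hy 0 (by omega)).le⟩
          · obtain ⟨j, hj1, hj2, hj3, hj4⟩ := ih hm h
            exact ⟨j, hj1, hj2.trans (Nat.le_succ m), hj3, hj4⟩
        · exact ⟨m + 1, by omega, le_refl _, by simpa using h.le, hxn⟩
    obtain ⟨j, hj1, hj2, hjx1, hjx2⟩ := exj (2 * s) (by omega) hx.2
    have hjlt : y (j - 1) < y j := by
      have := hy (j - 1) (by omega)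
      rwa [show j - 1 + 1 = j by omega] at this
    -- sign of derivative
    have hDsign : 0 ≤ (-1 : ℝ) ^ (j - 1) * deriv f x := by
      have hmj := hmono j hj1 hj2
      have hdg : DifferentiableAt ℝ (fun t => (-1 : ℝ) ^ (j - 1) * f t) x :=
        (hdf x).const_mul _
      have h0 := myDerivNonneg hjlt ⟨hjx1, hjx2⟩ hmj hdg
      rwa [deriv_const_mul _ (hdf x)] at h0
    -- split the product
    have hsplit : (∏ i ∈ Finset.Icc 1 (2 * s), Real.sin ((x - y i) / 2)) =
        (∏ i ∈ Finset.Ioc 0 (j - 1), Real.sin ((x - y i) / 2)) *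
        (∏ i ∈ Finset.Ioc (j - 1) (2 * s), Real.sin ((x - y i) / 2)) := by
      rw [show Finset.Icc 1 (2 * s) = Finset.Ioc 0 (2 * s) from Finset.Icc_add_one_left_eq_Ioc 0 (2 * s)]
      rw [Finset.prod_Ioc_consecutive _ (by omega : 0 ≤ j - 1) (by omega : j - 1 ≤ 2 * s)]
    have hP1 : 0 ≤ ∏ i ∈ Finset.Ioc 0 (j - 1), Real.sin ((x - y i) / 2) := by
      apply Finset.prod_nonneg
      intro i hi
      rw [Finset.mem_Ioc] at hi
      apply Real.sin_nonneg_of_nonneg_of_le_pi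
      · have : y i ≤ y (j - 1) := ymono (j - 1) (by omega) i hi.2
        linarith [hjx1]
      · have h1 : y 0 ≤ y i := ymono i (by omega) 0 (by omega)
        have h2 : x ≤ y 0 + 2 * Real.pi := hyper ▸ hx.2
        linarith
    -- second product: each factor nonpositive
    have hP2 : (∏ i ∈ Finset.Ioc (j - 1) (2 * s), Real.sin ((x - y i) / 2)) =
        (-1 : ℝ) ^ (2 * s - (j - 1)) *
        ∏ i ∈ Finset.Ioc (j - 1) (2 * s), (-Real.sin ((x - y i) / 2)) := by
      rw [myProdNeg (Finset.Ioc (j - 1) (2 * s)) (fun i => Real.sin ((x - y i) / 2)),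
        Nat.card_Ioc]
    have hQ : 0 ≤ ∏ i ∈ Finset.Ioc (j - 1) (2 * s), (-Real.sin ((x - y i) / 2)) := by
      apply Finset.prod_nonneg
      intro i hi
      rw [Finset.mem_Ioc] at hi
      rw [neg_nonneg]
      apply Real.sin_nonpos_of_nonpos_of_neg_pi_le
      · have : y j ≤ y i := ymono i hi.2 j (by omega)
        linarith [hjx2]
      · have h1 : y i ≤ y (2 * s) := ymono (2 * s) le_rfl i hi.2
        have h2 : y 0 ≤ x := hx.1
        have h3 : y i ≤ x + 2 * Real.pi := by
          have := hyper; linarith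
        linarith
    -- parity
    have hpar : ((-1 : ℝ)) ^ (2 * s - (j - 1)) = (-1 : ℝ) ^ (j - 1) := by
      have h1 : ((-1 : ℝ)) ^ (j - 1) * (-1 : ℝ) ^ (2 * s - (j - 1)) = 1 := by
        rw [← pow_add, show (j - 1) + (2 * s - (j - 1)) = 2 * s by omega, pow_mul]
        norm_num
      have h2 : ((-1 : ℝ)) ^ (j - 1) * (-1 : ℝ) ^ (j - 1) = 1 := by
        rw [← pow_add, show (j - 1) + (j - 1) = 2 * (j - 1) by ring, pow_mul]
        norm_num
      linear_combination ((-1 : ℝ)) ^ (j - 1) * h1 - ((-1 : ℝ)) ^ (2 * s - (j - 1)) * h2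
    rw [hsplit, hP2, hpar]
    have : deriv f x *
        ((∏ i ∈ Finset.Ioc 0 (j - 1), Real.sin ((x - y i) / 2)) *
          ((-1 : ℝ) ^ (j - 1) *
            ∏ i ∈ Finset.Ioc (j - 1) (2 * s), (-Real.sin ((x - y i) / 2)))) =
        ((-1 : ℝ) ^ (j - 1) * deriv f x) *
          ((∏ i ∈ Finset.Ioc 0 (j - 1), Real.sin ((x - y i) / 2)) *
            ∏ i ∈ Finset.Ioc (j - 1) (2 * s), (-Real.sin ((x - y i) / 2))) := by ring
    rw [this]
    exact mul_nonneg hDsign (mul_nonneg hP1 hQ)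
  -- periodic reduction
  intro x
  have hπ : (0 : ℝ) < 2 * Real.pi := by positivity
  set x' := toIcoMod hπ (y 0) x with hx'def
  have hmem : x' ∈ Set.Ico (y 0) (y 0 + 2 * Real.pi) := toIcoMod_mem_Ico hπ (y 0) x
  set k : ℤ := toIcoDiv hπ (y 0) x with hkdef
  have hxk : x = x' + k * (2 * Real.pi) := by
    rw [hx'def, toIcoMod, zsmul_eq_mul]; ring
  have hper : Function.Periodic f (2 * Real.pi) := hfper
  have hperk : Function.Periodic f (k * (2 * Real.pi)) := hper.int_mul k
  have hD : deriv f x = deriv f x' := by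
    conv_lhs => rw [hxk]
    rw [← deriv_comp_add_const]
    congr 1
    funext t
    exact hperk t
  have hProd : (∏ i ∈ Finset.Icc 1 (2 * s), Real.sin ((x - y i) / 2)) =
      ∏ i ∈ Finset.Icc 1 (2 * s), Real.sin ((x' - y i) / 2) := by
    have heach : ∀ i, Real.sin ((x - y i) / 2) =
        (-1 : ℝ) ^ k * Real.sin ((x' - y i) / 2) := by
      intro i
      rw [hxk, show (x' + k * (2 * Real.pi) - y i) / 2 = (x' - y i) / 2 + k * Real.pi by
        ring]
      exact Real.sin_add_int_mul_pi _ k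
    simp_rw [heach]
    rw [Finset.prod_mul_distrib, Finset.prod_const, Nat.card_Icc]
    have : ((-1 : ℝ) ^ k) ^ (2 * s + 1 - 1) = 1 := by
      rw [show 2 * s + 1 - 1 = 2 * s by omega]
      rcases Int.even_or_odd k with hk | hk
      · rw [hk.neg_one_zpow]; norm_num
      · rw [hk.neg_one_zpow, pow_mul]; norm_num
    rw [this, one_mul]
  rw [hD, hProd]
  exact key x' ⟨hmem.1, by rw [hyper]; exact hmem.2.le⟩
end

section
/- Let m ≥ 1, let t_0 < ... < t_m be real numbers and suppose g satisfies the alternation condition (-1)^{m-i}(g(t_i) − g(t_{i-1})) ≥ 0 for 1 ≤ i ≤ m. Let L be the polynomial of degree ≤ m interpolating g at t_0, ..., t_m. Then L'(x) = a·∏_{i=1}^{m-1}(x − x_i) for some a ≥ 0 and points x_1, ..., x_{m-1} ∈ (t_0, t_m). -/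
open Polynomial

private lemma mono_aux (y : ℕ → ℝ) (N : ℕ) (h : ∀ i < N, y i < y (i+1)) :
    ∀ i j, i ≤ j → j ≤ N → y i ≤ y j := by
  intro i j hij hjN
  induction j with
  | zero =>
    have : i = 0 := by omega
    simp [this]
  | succ k ih =>
    rcases Nat.lt_or_ge i (k+1) with hk | hk
    · exact le_trans (ih (by omega) (by omega)) (le_of_lt (h k (by omega)))
    · have : i = k + 1 := by omega
      simp [this]

private lemma key_lemma : ∀ (n : ℕ) (p : Polynomial ℝ) (y : ℕ → ℝ),
    p.degree ≤ (n : ℕ) →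
    (∀ i < n, y i < y (i+1)) →
    (∀ i ≤ n, 0 ≤ (-1 : ℝ) ^ (n - i) * p.eval (y i)) →
    ∃ a : ℝ, 0 ≤ a ∧ ∃ x : ℕ → ℝ,
      (∀ i, 1 ≤ i → i ≤ n → x i ∈ Set.Icc (y 0) (y n)) ∧
      ∀ z : ℝ, p.eval z = a * ∏ i ∈ Finset.Icc 1 n, (z - x i) := by
  intro n
  induction n with
  | zero =>
    intro p y hdeg _ hsign
    have hp : p = Polynomial.C (p.coeff 0) :=
      Polynomial.eq_C_of_degree_le_zero (by simpa using hdeg)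
    refine ⟨p.eval (y 0), by simpa using hsign 0 le_rfl, fun _ => y 0,
      fun i h1 h0 => by omega, ?_⟩
    intro z
    rw [Finset.Icc_eq_empty (by omega), Finset.prod_empty, mul_one]
    conv_lhs => rw [hp]
    conv_rhs => rw [hp]
    simp
  | succ n ih =>
    intro p y hdeg hmono hsign
    by_cases hp0 : p = 0
    · refine ⟨0, le_rfl, fun _ => y 0, ?_, by simp [hp0]⟩
      intro i h1 h2
      exact ⟨le_rfl, mono_aux y (n+1) hmono 0 (n+1) (by omega) le_rfl⟩
    · -- p ≠ 0
      have hyy : y n < y (n+1) := hmono n (by omega)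
      have hlast : 0 ≤ p.eval (y (n+1)) := by simpa using hsign (n+1) le_rfl
      have hprev : p.eval (y n) ≤ 0 := by
        have := hsign n (by omega)
        have e : n + 1 - n = 1 := by omega
        rw [e] at this
        simpa using this
      -- find a root r and a point zn for the index-n sign condition
      obtain ⟨r, hr1, hr2, hroot, zn, hzn1, hzn2, hznr, hsgn⟩ :
          ∃ r, y n ≤ r ∧ r ≤ y (n+1) ∧ p.eval r = 0 ∧
            ∃ zn, y n ≤ zn ∧ zn ≤ y (n+1) ∧ zn ≠ r ∧ 0 ≤ p.eval zn * (zn - r) := by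
        rcases eq_or_lt_of_le hlast with h0 | hpos
        · exact ⟨y (n+1), le_of_lt hyy, le_rfl, h0.symm, y n, le_rfl, le_of_lt hyy,
            ne_of_lt hyy, by nlinarith⟩
        · rcases eq_or_lt_of_le hprev with h0 | hneg
          · exact ⟨y n, le_rfl, le_of_lt hyy, h0, y (n+1), le_of_lt hyy, le_rfl,
              (ne_of_lt hyy).symm, by nlinarith⟩
          · have hcont : ContinuousOn (fun x => p.eval x) (Set.Icc (y n) (y (n+1))) :=
              (Polynomial.continuous p).continuousOn
            have hmem : (0:ℝ) ∈ Set.Ioo (p.eval (y n)) (p.eval (y (n+1))) := ⟨hneg, hpos⟩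
            obtain ⟨r, hrIoo, hr0⟩ := intermediate_value_Ioo (le_of_lt hyy) hcont hmem
            exact ⟨r, le_of_lt hrIoo.1, le_of_lt hrIoo.2, hr0, y (n+1), le_of_lt hyy,
              le_rfl, (ne_of_lt hrIoo.2).symm, by nlinarith [hrIoo.2]⟩
      set q := p /ₘ (X - C r) with hq
      have hfact : (X - C r) * q = p :=
        Polynomial.mul_divByMonic_eq_iff_isRoot.mpr hroot
      have hqdeg : q.degree ≤ (n : ℕ) := by
        by_cases hq0 : q = 0
        · simp [hq0]
        · have hlt : q.degree < p.degree :=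
            Polynomial.degree_divByMonic_lt p (X - C r) hp0
              (by rw [Polynomial.degree_X_sub_C]; norm_num)
          have h2 : q.degree < ((n+1 : ℕ) : WithBot ℕ) := lt_of_lt_of_le hlt hdeg
          have h3 : q.natDegree < n + 1 := (Polynomial.natDegree_lt_iff_degree_lt hq0).mpr h2
          exact Polynomial.natDegree_le_iff_degree_le.mp (by omega)
      have hev : ∀ w : ℝ, p.eval w = (w - r) * q.eval w := by
        intro w
        conv_lhs => rw [← hfact]
        simp [mul_comm]
      -- new points
      set z : ℕ → ℝ := Function.update y n zn with hz
      have hzn' : z n = zn := Function.update_self n zn y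
      have hzi : ∀ i, i ≠ n → z i = y i := fun i hi => Function.update_of_ne hi zn y
      have hzmono : ∀ i < n, z i < z (i+1) := by
        intro i hi
        rcases Nat.lt_or_ge i (n-1) with h | h
        · rw [hzi i (by omega), hzi (i+1) (by omega)]
          exact hmono i (by omega)
        · have hin : i = n - 1 := by omega
          have hn1 : 1 ≤ n := by omega
          rw [hzi i (by omega)]
          have : i + 1 = n := by omega
          rw [this, hzn']
          calc y i < y n := by
                have := mono_aux y (n+1) hmono (i+1) n (by omega) (by omega)
                have h2 := hmono i (by omega)
                linarith
            _ ≤ zn := hzn1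
      have hzsign : ∀ i ≤ n, 0 ≤ (-1 : ℝ) ^ (n - i) * q.eval (z i) := by
        intro i hi
        rcases Nat.lt_or_ge i n with h | h
        · -- z i = y i < r
          rw [hzi i (by omega)]
          have hyr : y i < r := lt_of_lt_of_le
            (lt_of_le_of_lt (mono_aux y (n+1) hmono i (n-1) (by omega) (by omega))
              (by have := hmono (n-1) (by omega); have e : n - 1 + 1 = n := by omega;
                  rwa [e] at this)) hr1
          have hs := hsign i (by omega)
          have e : n + 1 - i = (n - i) + 1 := by omega
          rw [e, pow_succ] at hs
          have hev' := hev (y i)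
          set P := (-1 : ℝ) ^ (n - i) with hP
          -- hs : 0 ≤ P * (-1) * p.eval (y i); p.eval (y i) = (y i - r) * q.eval (y i)
          rw [hev'] at hs
          nlinarith [sq_nonneg P, sq_nonneg (P * q.eval (y i))]
        · -- i = n
          have hin : i = n := by omega
          subst hin
          rw [hzn']
          simp only [Nat.sub_self, pow_zero, one_mul]
          have hev' := hev zn
          rw [hev'] at hsgn
          have hne : (zn - r) ≠ 0 := sub_ne_zero.mpr hznr
          have hsq : 0 < (zn - r)^2 :=
            lt_of_le_of_ne (sq_nonneg _) (Ne.symm (pow_ne_zero 2 hne))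
          nlinarith [hsq, hsgn]
      obtain ⟨a, ha, x', hx'mem, hx'eq⟩ := ih q z hqdeg hzmono hzsign
      -- assemble
      refine ⟨a, ha, Function.update x' (n+1) r, ?_, ?_⟩
      · intro i h1 h2
        have hy0zn : y 0 ≤ zn := le_trans (mono_aux y (n+1) hmono 0 n (by omega) (by omega)) hzn1
        have hz0 : y 0 ≤ z 0 := by
          by_cases h : n = 0
          · rw [hz, h]; simpa using hy0zn
          · rw [hzi 0 (by omega)]
        have hzn'' : z n ≤ y (n+1) := by rw [hzn']; exact hzn2
        rcases Nat.lt_or_ge i (n+1) with h | h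
        · rw [Function.update_of_ne (by omega)]
          have := hx'mem i h1 (by omega)
          exact ⟨le_trans hz0 this.1, le_trans this.2 hzn''⟩
        · have : i = n + 1 := by omega
          rw [this, Function.update_self]
          exact ⟨le_trans (mono_aux y (n+1) hmono 0 n (by omega) (by omega)) hr1, hr2⟩
      · intro w
        rw [hev w, hx'eq w, Finset.prod_Icc_succ_top (by omega)]
        rw [Function.update_self]
        have : ∏ i ∈ Finset.Icc 1 n, (w - Function.update x' (n+1) r i)
            = ∏ i ∈ Finset.Icc 1 n, (w - x' i) := by
          apply Finset.prod_congr rfl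
          intro i hi
          rw [Function.update_of_ne]
          simp only [Finset.mem_Icc] at hi
          omega
        rw [this]
        ring

theorem stmt17 (m : ℕ) (hm : 1 ≤ m) (t : ℕ → ℝ) (g : ℝ → ℝ)
    (ht : ∀ i < m, t i < t (i + 1))
    (hg : ∀ i, 1 ≤ i → i ≤ m → 0 ≤ (-1 : ℝ) ^ (m - i) * (g (t i) - g (t (i - 1))))
    (L : Polynomial ℝ) (hdeg : L.degree ≤ m)
    (hinterp : ∀ i ≤ m, L.eval (t i) = g (t i)) :
    ∃ a : ℝ, 0 ≤ a ∧ ∃ x : ℕ → ℝ,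
      (∀ i, 1 ≤ i → i ≤ m - 1 → x i ∈ Set.Ioo (t 0) (t m)) ∧
      ∀ y : ℝ, (Polynomial.derivative L).eval y =
        a * ∏ i ∈ Finset.Icc 1 (m - 1), (y - x i) := by
  -- degree bound on L'
  have hd : (derivative L).degree ≤ ((m - 1 : ℕ) : WithBot ℕ) := by
    by_cases hL : derivative L = 0
    · simp [hL]
    · have h1 : (derivative L).natDegree ≤ L.natDegree - 1 := Polynomial.natDegree_derivative_le L
      have h2 : L.natDegree ≤ m := Polynomial.natDegree_le_iff_degree_le.mpr hdeg
      exact Polynomial.natDegree_le_iff_degree_le.mp (by omega)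
  -- MVT points
  have H : ∀ i, ∃ c, i < m → c ∈ Set.Ioo (t i) (t (i+1)) ∧
      (derivative L).eval c * (t (i+1) - t i) = g (t (i+1)) - g (t i) := by
    intro i
    by_cases h : i < m
    · obtain ⟨c, hc, hc'⟩ := exists_deriv_eq_slope (fun x => L.eval x) (ht i h)
        (L.continuous.continuousOn) (L.differentiable.differentiableOn)
      refine ⟨c, fun _ => ⟨hc, ?_⟩⟩
      rw [Polynomial.deriv] at hc'
      have hne : t (i+1) - t i ≠ 0 := ne_of_gt (by linarith [ht i h])
      have : (derivative L).eval c * (t (i+1) - t i) = L.eval (t (i+1)) - L.eval (t i) := by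
        field_simp at hc'
        linarith [hc']
      rw [this, hinterp (i+1) (by omega), hinterp i (by omega)]
    · exact ⟨0, fun h' => absurd h' h⟩
  choose c hc using H
  -- apply key lemma with n = m - 1, points c 0, ..., c (m-1)
  have hcmono : ∀ i < m - 1, c i < c (i+1) := by
    intro i hi
    have h1 := (hc i (by omega)).1
    have h2 := (hc (i+1) (by omega)).1
    exact lt_trans h1.2 h2.1
  have hcsign : ∀ i ≤ m - 1, 0 ≤ (-1 : ℝ) ^ (m - 1 - i) * (derivative L).eval (c i) := by
    intro i hi
    have hgd := hg (i+1) (by omega) (by omega)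
    have e1 : i + 1 - 1 = i := by omega
    have e2 : m - (i+1) = m - 1 - i := by omega
    rw [e1, e2] at hgd
    have hmvt := (hc i (by omega)).2
    rw [← hmvt] at hgd
    have hpos : 0 < t (i+1) - t i := by linarith [ht i (by omega)]
    have : 0 ≤ (-1 : ℝ) ^ (m - 1 - i) * (derivative L).eval (c i) * (t (i+1) - t i) := by
      linarith [hgd]
    exact (mul_nonneg_iff_of_pos_right hpos).mp this
  obtain ⟨a, ha, x, hxmem, hxeq⟩ := key_lemma (m-1) (derivative L) c hd hcmono hcsign
  refine ⟨a, ha, x, ?_, hxeq⟩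
  intro i h1 h2
  have := hxmem i h1 h2
  have hc0 : t 0 < c 0 := (hc 0 (by omega)).1.1
  have hcm : c (m-1) < t m := by
    have := (hc (m-1) (by omega)).1.2
    have e : m - 1 + 1 = m := by omega
    rwa [e] at this
  exact ⟨lt_of_lt_of_le hc0 this.1, lt_of_le_of_lt this.2 hcm⟩
end

section
/- Let r ≥ 0 and n > max{r+1, 8}, set b := n^{−2}, and suppose τ, F are functions with ‖F − τ‖ ≤ (2b)^{r+1} (sup norm on ℝ), τ is (r+1) times differentiable, and there exists θ with |τ^{(r+1)}(θ)| ≥ 1/2. If T is a trigonometric polynomial of degree < n with T^{(r+1)}(θ) = 0 and τ is a trigonometric polynomial of degree ≤ r+1, then n^{r+1}·‖F − T‖ > 1/4. -/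
open Complex Finset

namespace S19

noncomputable def t (m k : ℕ) : ℝ := ((2*k+1 : ℕ) : ℝ) * Real.pi / (2*m)

noncomputable def μ (m k : ℕ) : ℝ := (-1)^k / Real.sin (t m k / 2)^2


noncomputable def w (m k : ℕ) : ℂ :=
  Complex.exp ((((2*k+1 : ℕ) : ℝ) * Real.pi / (2*m)) * Complex.I)

lemma w_pow (m k a : ℕ) : w m k ^ a =
    Complex.exp ((((a*(2*k+1) : ℕ) : ℝ) * Real.pi / (2*m)) * Complex.I) := by
  rw [w, ← Complex.exp_nat_mul]
  congr 1
  push_cast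
  ring

lemma w_ne_one (m k : ℕ) (hm : 0 < m) : w m k ≠ 1 := by
  rw [w, Ne, Complex.exp_eq_one_iff]
  rintro ⟨t, ht⟩
  have hI : (Complex.I : ℂ) ≠ 0 := Complex.I_ne_zero
  have hπ := Real.pi_ne_zero
  have hm' : (m:ℝ) ≠ 0 := Nat.cast_ne_zero.mpr hm.ne'
  have h2 : ((((2*k+1:ℕ):ℝ) * Real.pi / (2*m) : ℝ) : ℂ) = ((2 * Real.pi * (t:ℝ) : ℝ) : ℂ) := by
    apply mul_right_cancel₀ hI
    push_cast at ht ⊢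
    linear_combination ht
  have h3 : ((2*k+1 : ℕ) : ℝ) * Real.pi / (2*m) = 2 * Real.pi * t := by
    exact_mod_cast h2
  have h4 : ((2*k+1:ℕ):ℝ) * Real.pi = ((4 * t * m : ℤ) : ℝ) * Real.pi := by
    field_simp at h3
    push_cast at h3 ⊢
    linear_combination Real.pi * h3
  have h5 : ((2*k+1:ℕ):ℤ) = 4 * t * m := by
    exact_mod_cast mul_right_cancel₀ hπ h4
  have heven : (2:ℤ) ∣ ((2*k+1:ℕ):ℤ) := h5 ▸ ⟨2*t*m, by ring⟩
  have : (2:ℤ) ∣ 2*(k:ℤ)+1 := by push_cast at heven; exact_mod_cast heven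
  omega

lemma w_pow_two_mul (m k : ℕ) (hm : 0 < m) : w m k ^ (2*m) = -1 := by
  rw [w_pow]
  have hm' : (m:ℂ) ≠ 0 := Nat.cast_ne_zero.mpr hm.ne'
  refine Eq.trans (congrArg Complex.exp
    (?_ : _ = ((k:ℤ):ℂ) * (2*(Real.pi:ℂ)*Complex.I) + (Real.pi:ℂ)*Complex.I)) ?_
  · push_cast
    field_simp
  · rw [Complex.exp_add, Complex.exp_int_mul_two_pi_mul_I, Complex.exp_pi_mul_I]
    ring

lemma w_ne_zero (m k : ℕ) : w m k ≠ 0 := Complex.exp_ne_zero _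

/-- power sum vanishes when 2m does not divide c -/
lemma psum_zero (m : ℕ) (hm : 0 < m) (c : ℕ) (hc : ¬ (2*m ∣ c)) :
    ∑ k ∈ range (2*m), w m k ^ c = 0 := by
  have hm' : (m:ℝ) ≠ 0 := Nat.cast_ne_zero.mpr hm.ne'
  set z : ℂ := Complex.exp (((c:ℝ) * Real.pi / m) * Complex.I) with hz
  have hne : z ≠ 1 := by
    rw [hz, Ne, Complex.exp_eq_one_iff]
    rintro ⟨t, ht⟩
    have hI : (Complex.I : ℂ) ≠ 0 := Complex.I_ne_zero
    have hπ := Real.pi_ne_zero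
    have h2 : (((c:ℝ) * Real.pi / m : ℝ) : ℂ) = ((2 * Real.pi * (t:ℝ) : ℝ) : ℂ) := by
      apply mul_right_cancel₀ hI
      push_cast at ht ⊢
      linear_combination ht
    have h3 : (c:ℝ) * Real.pi / m = 2 * Real.pi * t := by exact_mod_cast h2
    have h4 : ((c:ℕ):ℝ) * Real.pi = ((2 * t * m : ℤ) : ℝ) * Real.pi := by
      field_simp at h3
      push_cast at h3 ⊢
      linear_combination Real.pi * h3
    have h5 : ((c:ℕ):ℤ) = 2 * t * m := by
      exact_mod_cast mul_right_cancel₀ hπ h4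
    have : ((2*m : ℕ) : ℤ) ∣ (c : ℤ) := ⟨t, by push_cast; linear_combination h5⟩
    exact hc (Int.ofNat_dvd.mp this)
  -- w m k ^ c = z ^ k * w m 0 ^ c
  have hterm : ∀ k, w m k ^ c = z ^ k * w m 0 ^ c := by
    intro k
    rw [w_pow, w_pow, hz, ← Complex.exp_nat_mul, ← Complex.exp_add]
    refine congrArg Complex.exp ?_
    push_cast
    field_simp
  rw [Finset.sum_congr rfl (fun k _ => hterm k), ← Finset.sum_mul, geom_sum_eq hne]
  have hmC : (m:ℂ) ≠ 0 := Nat.cast_ne_zero.mpr hm.ne'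
  have hz2m : z ^ (2*m) = 1 := by
    rw [hz, ← Complex.exp_nat_mul]
    refine Eq.trans (congrArg Complex.exp
      (?_ : _ = ((c:ℤ):ℂ) * (2*(Real.pi:ℂ)*Complex.I))) (Complex.exp_int_mul_two_pi_mul_I c)
    push_cast
    field_simp
  rw [hz2m]
  simp

lemma psum_zero' (m : ℕ) (hm : 0 < m) (c : ℕ) (h0 : c ≠ 0) (h1 : c ≠ 2*m) (h2 : c < 4*m) :
    ∑ k ∈ range (2*m), w m k ^ c = 0 := by
  refine psum_zero m hm c ?_
  rintro ⟨q, hq⟩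
  have hq2 : q < 2 := by nlinarith
  interval_cases q <;> omega

lemma psum_two_mul (m : ℕ) (hm : 0 < m) :
    ∑ k ∈ range (2*m), w m k ^ (2*m) = -(2*m) := by
  rw [Finset.sum_congr rfl (fun k _ => w_pow_two_mul m k hm)]
  simp

lemma geom_rel (m k : ℕ) (hm : 0 < m) :
    (∑ a ∈ range (2*m), w m k ^ a) = -2 / (w m k - 1) := by
  have h1 : w m k - 1 ≠ 0 := sub_ne_zero.mpr (w_ne_one m k hm)
  rw [eq_div_iff h1, geom_sum_mul, w_pow_two_mul m k hm]
  ring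

lemma sum_inv (m : ℕ) (hm : 0 < m) :
    ∑ k ∈ range (2*m), (w m k - 1)⁻¹ = -(m:ℂ) := by
  have h1 : ∀ k ∈ range (2*m), (w m k - 1)⁻¹
      = (-1/2) * ∑ a ∈ range (2*m), w m k ^ a := by
    intro k _
    have hne : w m k - 1 ≠ 0 := sub_ne_zero.mpr (w_ne_one m k hm)
    rw [geom_rel m k hm]
    field_simp
  rw [Finset.sum_congr rfl h1, ← Finset.mul_sum, Finset.sum_comm]
  rw [Finset.sum_eq_single 0
    (fun b hb hb0 => psum_zero' m hm b hb0
      (by have := Finset.mem_range.mp hb; omega) (by have := Finset.mem_range.mp hb; omega))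
    (fun h => absurd (Finset.mem_range.mpr (by omega : 0 < 2*m)) h)]
  simp only [pow_zero, Finset.sum_const, Finset.card_range, nsmul_eq_mul, mul_one]
  push_cast
  ring

lemma sum_inv_sq (m : ℕ) (hm : 0 < m) :
    ∑ k ∈ range (2*m), ((w m k - 1)⁻¹)^2 = (m:ℂ) - (m:ℂ)^2 := by
  have h1 : ∀ k ∈ range (2*m), ((w m k - 1)⁻¹)^2
      = (1/4) * ((∑ a ∈ range (2*m), w m k ^ a) * (∑ b ∈ range (2*m), w m k ^ b)) := by
    intro k _
    have hne : w m k - 1 ≠ 0 := sub_ne_zero.mpr (w_ne_one m k hm)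
    rw [geom_rel m k hm]
    field_simp
    ring
  rw [Finset.sum_congr rfl h1, ← Finset.mul_sum]
  have h2 : ∀ k ∈ range (2*m),
      (∑ a ∈ range (2*m), w m k ^ a) * (∑ b ∈ range (2*m), w m k ^ b)
      = ∑ a ∈ range (2*m), ∑ b ∈ range (2*m), w m k ^ (a+b) := by
    intro k _
    rw [Finset.sum_mul_sum]
    exact Finset.sum_congr rfl fun a _ => Finset.sum_congr rfl fun b _ => (pow_add _ a b).symm
  rw [Finset.sum_congr rfl h2]
  rw [Finset.sum_comm]
  have h3 : ∀ a ∈ range (2*m),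
      (∑ k ∈ range (2*m), ∑ b ∈ range (2*m), w m k ^ (a+b))
      = (if a = 0 then (2*m:ℂ) else -(2*m:ℂ)) := by
    intro a ha
    rw [Finset.sum_comm]
    have ha' : a < 2*m := Finset.mem_range.mp ha
    rcases Nat.eq_zero_or_pos a with h0 | h0
    · subst h0
      rw [Finset.sum_eq_single 0
        (fun b hb hb0 => by
          simpa using psum_zero' m hm b hb0
            (by have := Finset.mem_range.mp hb; omega) (by have := Finset.mem_range.mp hb; omega))
        (fun h => absurd (Finset.mem_range.mpr (by omega : 0 < 2*m)) h)]
      simp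
    · rw [Finset.sum_eq_single (2*m - a)
        (fun b hb hbne => psum_zero' m hm (a+b)
          (by omega)
          (by have := Finset.mem_range.mp hb; omega)
          (by have := Finset.mem_range.mp hb; omega))
        (fun h => absurd (Finset.mem_range.mpr (by omega : 2*m - a < 2*m)) h)]
      have : a + (2*m - a) = 2*m := by omega
      rw [this, psum_two_mul m hm]
      simp [h0.ne']
  have h4 : ∀ x ∈ range (2*m), (if x = 0 then (2*m:ℂ) else -(2*m))
      = -(2*m) + (if x = 0 then (4*m:ℂ) else 0) := by
    intro x _
    split <;> ring
  rw [Finset.sum_congr rfl h3, Finset.sum_congr rfl h4, Finset.sum_add_distrib,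
    Finset.sum_ite_eq' (range (2*m)) 0 (fun _ => (4*m:ℂ)),
    if_pos (Finset.mem_range.mpr (by omega : 0 < 2*m))]
  simp only [Finset.sum_const, Finset.card_range, nsmul_eq_mul]
  push_cast
  ring

lemma R_eq (m : ℕ) (hm : 0 < m) : ∀ a, 1 ≤ a → a ≤ 2*m →
    ∑ k ∈ range (2*m), w m k ^ a / (w m k - 1) = (m:ℂ) := by
  intro a h1a
  induction a, h1a using Nat.le_induction with
  | base =>
    intro _
    have h1 : ∀ k ∈ range (2*m), w m k ^ 1 / (w m k - 1) = 1 + (w m k - 1)⁻¹ := by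
      intro k _
      have hne : w m k - 1 ≠ 0 := sub_ne_zero.mpr (w_ne_one m k hm)
      field_simp
      ring
    rw [Finset.sum_congr rfl h1, Finset.sum_add_distrib, sum_inv m hm]
    simp
    push_cast
    ring
  | succ a ha ih =>
    intro h2
    have h1 : ∀ k ∈ range (2*m), w m k ^ (a+1) / (w m k - 1)
        = w m k ^ a / (w m k - 1) + w m k ^ a := by
      intro k _
      have hne : w m k - 1 ≠ 0 := sub_ne_zero.mpr (w_ne_one m k hm)
      field_simp
      ring
    rw [Finset.sum_congr rfl h1, Finset.sum_add_distrib, ih (by omega),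
      psum_zero' m hm a (by omega) (by omega) (by omega), add_zero]

lemma S_eq (m : ℕ) (hm : 0 < m) : ∀ a, 1 ≤ a → a ≤ 2*m+1 →
    ∑ k ∈ range (2*m), w m k ^ a / (w m k - 1)^2 = (a:ℂ)*m - m - (m:ℂ)^2 := by
  intro a h1a
  induction a, h1a using Nat.le_induction with
  | base =>
    intro _
    have h1 : ∀ k ∈ range (2*m), w m k ^ 1 / (w m k - 1)^2
        = (w m k - 1)⁻¹ + ((w m k - 1)⁻¹)^2 := by
      intro k _
      have hne : w m k - 1 ≠ 0 := sub_ne_zero.mpr (w_ne_one m k hm)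
      field_simp
      ring
    rw [Finset.sum_congr rfl h1, Finset.sum_add_distrib, sum_inv m hm, sum_inv_sq m hm]
    push_cast
    ring
  | succ a ha ih =>
    intro h2
    have h1 : ∀ k ∈ range (2*m), w m k ^ (a+1) / (w m k - 1)^2
        = w m k ^ a / (w m k - 1)^2 + w m k ^ a / (w m k - 1) := by
      intro k _
      have hne : w m k - 1 ≠ 0 := sub_ne_zero.mpr (w_ne_one m k hm)
      field_simp
      ring
    rw [Finset.sum_congr rfl h1, Finset.sum_add_distrib, ih (by omega),
      R_eq m hm a (by omega) (by omega)]
    push_cast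
    ring

lemma sin_t_pos (m k : ℕ) (hm : 0 < m) (hk : k < 2*m) : 0 < Real.sin (t m k / 2) := by
  apply Real.sin_pos_of_pos_of_lt_pi
  · rw [t]
    positivity
  · rw [t, div_div]
    rw [div_lt_iff₀ (by positivity)]
    have h1 : ((2*k+1 : ℕ) : ℝ) < 4*m := by exact_mod_cast (by omega : 2*k+1 < 4*m)
    nlinarith [Real.pi_pos]

lemma exp_pi_div_two_mul_I : Complex.exp ((Real.pi/2 : ℝ) * Complex.I) = Complex.I := by
  rw [Complex.exp_mul_I, ← Complex.ofReal_cos, ← Complex.ofReal_sin,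
    Real.cos_pi_div_two, Real.sin_pi_div_two]
  simp

lemma key_term (m k j : ℕ) (hm : 0 < m) (hk : k < 2*m) :
    ((μ m k : ℝ) : ℂ) * Complex.exp (((j * t m k : ℝ)) * Complex.I)
      = 4 * Complex.I * w m k ^ (m+j+1) / (w m k - 1)^2 := by
  have hI := Complex.I_ne_zero
  set v := Complex.exp (((t m k / 2 : ℝ)) * Complex.I) with hv
  have hv0 : v ≠ 0 := Complex.exp_ne_zero _
  have hvv : v * v = w m k := by
    rw [hv, w, ← Complex.exp_add]
    refine congrArg Complex.exp ?_
    rw [t]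
    push_cast
    ring
  have hv2m : v ^ (2*m) = (-1:ℂ)^k * Complex.I := by
    rw [hv, ← Complex.exp_nat_mul]
    have harg : ((2*m : ℕ):ℂ) * ((t m k / 2 : ℝ) * Complex.I)
        = (k:ℂ) * ((Real.pi:ℂ) * Complex.I) + ((Real.pi/2 : ℝ):ℂ) * Complex.I := by
      rw [t]
      have hm' : (m:ℂ) ≠ 0 := Nat.cast_ne_zero.mpr hm.ne'
      push_cast
      field_simp
    rw [harg, Complex.exp_add, Complex.exp_nat_mul, Complex.exp_pi_mul_I,
      exp_pi_div_two_mul_I]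
  have hexpj : Complex.exp (((j * t m k : ℝ)) * Complex.I) = v ^ (2*j) := by
    rw [hv, ← Complex.exp_nat_mul]
    refine congrArg Complex.exp ?_
    push_cast
    ring
  have hsin : (Real.sin (t m k / 2) : ℂ) = (v⁻¹ - v) * Complex.I / 2 := by
    rw [Complex.ofReal_sin, Complex.sin, hv, neg_mul, Complex.exp_neg]
  have hw1 : v * v - 1 ≠ 0 := by rw [hvv]; exact sub_ne_zero.mpr (w_ne_one m k hm)
  have hvv1 : v⁻¹ - v ≠ 0 := by
    intro h
    apply hw1
    have h2 : v * v - 1 = -(v * (v⁻¹ - v)) := by field_simp; ring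
    rw [h2, h, mul_zero, neg_zero]
  have hneg : ((-1:ℂ))^k = v^(2*m) * (-Complex.I) := by
    rw [hv2m]
    have : Complex.I * Complex.I = -1 := Complex.I_mul_I
    calc ((-1:ℂ))^k = (-1:ℂ)^k * (Complex.I * -Complex.I) := by
            rw [show Complex.I * -Complex.I = 1 by rw [mul_neg, this]; ring]; ring
      _ = (-1:ℂ)^k * Complex.I * -Complex.I := by ring
  have hsin2 : ((v⁻¹ - v) * Complex.I / 2)^2 = -((v*v-1)^2) / (4 * v^2) := by
    rw [div_pow, mul_pow, Complex.I_sq]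
    rw [div_eq_div_iff (by norm_num) (mul_ne_zero (by norm_num) (pow_ne_zero 2 hv0))]
    field_simp
    ring
  rw [μ, ← hvv, Complex.ofReal_div, Complex.ofReal_pow, Complex.ofReal_pow,
    Complex.ofReal_neg, Complex.ofReal_one, hsin, hexpj, hneg, hsin2]
  rw [div_div_eq_mul_div, div_mul_eq_mul_div,
    div_eq_div_iff (neg_ne_zero.mpr (pow_ne_zero 2 hw1)) (pow_ne_zero 2 hw1)]
  ring


lemma csc_term (m k : ℕ) (hm : 0 < m) :
    ((1 / Real.sin (t m k / 2)^2 : ℝ) : ℂ) = -4 * (w m k / (w m k - 1)^2) := by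
  have hI := Complex.I_ne_zero
  set v := Complex.exp (((t m k / 2 : ℝ)) * Complex.I) with hv
  have hv0 : v ≠ 0 := Complex.exp_ne_zero _
  have hvv : v * v = w m k := by
    rw [hv, w, ← Complex.exp_add]
    refine congrArg Complex.exp ?_
    rw [t]
    push_cast
    ring
  have hsin : (Real.sin (t m k / 2) : ℂ) = (v⁻¹ - v) * Complex.I / 2 := by
    rw [Complex.ofReal_sin, Complex.sin, hv, neg_mul, Complex.exp_neg]
  have hw1 : v * v - 1 ≠ 0 := by rw [hvv]; exact sub_ne_zero.mpr (w_ne_one m k hm)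
  have hsin2 : ((v⁻¹ - v) * Complex.I / 2)^2 = -((v*v-1)^2) / (4 * v^2) := by
    rw [div_pow, mul_pow, Complex.I_sq]
    rw [div_eq_div_iff (by norm_num) (mul_ne_zero (by norm_num) (pow_ne_zero 2 hv0))]
    field_simp
    ring
  rw [Complex.ofReal_div, Complex.ofReal_one, Complex.ofReal_pow, hsin, hsin2, ← hvv]
  rw [one_div, inv_div, ← mul_div_assoc,
    div_eq_div_iff (neg_ne_zero.mpr (pow_ne_zero 2 hw1)) (pow_ne_zero 2 hw1)]
  ring

lemma csc_sum (m : ℕ) (hm : 0 < m) :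
    ∑ k ∈ range (2*m), 1 / Real.sin (t m k / 2)^2 = 4*(m:ℝ)^2 := by
  have h : ((∑ k ∈ range (2*m), 1 / Real.sin (t m k / 2)^2 : ℝ) : ℂ) = ((4*(m:ℝ)^2 : ℝ) : ℂ) := by
    rw [Complex.ofReal_sum]
    rw [Finset.sum_congr rfl (fun k _ => csc_term m k hm)]
    have h1 : ∀ k ∈ range (2*m), -4 * (w m k / (w m k - 1)^2)
        = -4 * (w m k ^ 1 / (w m k - 1)^2) := by
      intro k _
      rw [pow_one]
    rw [Finset.sum_congr rfl h1, ← Finset.mul_sum, S_eq m hm 1 le_rfl (by omega)]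
    push_cast
    ring
  exact_mod_cast h

lemma key_sum (m j : ℕ) (hm : 0 < m) (hj : j ≤ m) :
    ∑ k ∈ range (2*m), ((μ m k : ℝ) : ℂ) * Complex.exp (((j * t m k : ℝ)) * Complex.I)
      = 4 * Complex.I * j * m := by
  rw [Finset.sum_congr rfl (fun k hk => key_term m k j hm (Finset.mem_range.mp hk))]
  have h1 : ∀ k ∈ range (2*m), 4 * Complex.I * w m k ^ (m+j+1) / (w m k - 1)^2
      = (4 * Complex.I) * (w m k ^ (m+j+1) / (w m k - 1)^2) := by
    intro k _
    ring
  rw [Finset.sum_congr rfl h1, ← Finset.mul_sum, S_eq m hm (m+j+1) (by omega) (by omega)]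
  push_cast
  ring

lemma mu_cos (m j : ℕ) (hm : 0 < m) (hj : j ≤ m) :
    ∑ k ∈ range (2*m), μ m k * Real.cos (j * t m k) = 0 := by
  have h := congrArg Complex.re (key_sum m j hm hj)
  rw [Complex.re_sum] at h
  simp only [Complex.mul_re, Complex.mul_im, Complex.ofReal_re, Complex.ofReal_im,
    Complex.exp_ofReal_mul_I_re, Complex.exp_ofReal_mul_I_im, Complex.I_re, Complex.I_im,
    Complex.natCast_re, Complex.natCast_im] at h
  norm_num at h
  convert h using 2 <;> norm_num

lemma mu_sin (m j : ℕ) (hm : 0 < m) (hj : j ≤ m) :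
    ∑ k ∈ range (2*m), μ m k * Real.sin (j * t m k) = 4 * j * m := by
  have h := congrArg Complex.im (key_sum m j hm hj)
  rw [Complex.im_sum] at h
  simp only [Complex.mul_re, Complex.mul_im, Complex.ofReal_re, Complex.ofReal_im,
    Complex.exp_ofReal_mul_I_re, Complex.exp_ofReal_mul_I_im, Complex.I_re, Complex.I_im,
    Complex.natCast_re, Complex.natCast_im] at h
  norm_num at h
  convert h using 2 <;> norm_num

/-- real trig polynomial with coefficients `a`, `b`, degree `< n` -/
noncomputable def TP (a b : ℕ → ℝ) (n : ℕ) (x : ℝ) : ℝ :=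
  ∑ j ∈ range n, (a j * Real.cos (j * x) + b j * Real.sin (j * x))

/-- derivative operation on coefficient pairs -/
noncomputable def D (c : (ℕ → ℝ) × (ℕ → ℝ)) : (ℕ → ℝ) × (ℕ → ℝ) :=
  (fun j => j * c.2 j, fun j => -(j * c.1 j))

/-- the M. Riesz interpolation formula -/
lemma riesz (m : ℕ) (hm : 0 < m) (c : (ℕ → ℝ) × (ℕ → ℝ)) (x : ℝ) :
    ∑ k ∈ range (2*m), (μ m k / (4*m)) * TP c.1 c.2 (m+1) (x + t m k)
      = TP (D c).1 (D c).2 (m+1) x := by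
  have hm' : (m:ℝ) ≠ 0 := Nat.cast_ne_zero.mpr hm.ne'
  simp only [TP, D, Finset.mul_sum]
  rw [Finset.sum_comm]
  refine Finset.sum_congr rfl fun j hj => ?_
  have hjm : j ≤ m := by have := Finset.mem_range.mp hj; omega
  have h1 : ∀ k ∈ range (2*m),
      μ m k / (4*m) * (c.1 j * Real.cos (j * (x + t m k)) + c.2 j * Real.sin (j * (x + t m k)))
      = ((c.1 j * Real.cos (j*x) + c.2 j * Real.sin (j*x))/(4*m)) * (μ m k * Real.cos (j * t m k))
        + ((- c.1 j * Real.sin (j*x) + c.2 j * Real.cos (j*x))/(4*m)) * (μ m k * Real.sin (j * t m k)) := by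
    intro k _
    have : (j:ℝ) * (x + t m k) = j*x + j * t m k := by ring
    rw [this, Real.cos_add, Real.sin_add]
    ring
  rw [Finset.sum_congr rfl h1, Finset.sum_add_distrib, ← Finset.mul_sum, ← Finset.mul_sum,
    mu_cos m j hm hjm, mu_sin m j hm hjm, mul_zero, zero_add]
  field_simp
  ring

/-- single-step Bernstein inequality -/
lemma bernstein_step (m : ℕ) (hm : 0 < m) (c : (ℕ → ℝ) × (ℕ → ℝ)) (C : ℝ)
    (hC : ∀ x, |TP c.1 c.2 (m+1) x| ≤ C) (x : ℝ) :
    |TP (D c).1 (D c).2 (m+1) x| ≤ m * C := by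
  have hC0 : 0 ≤ C := le_trans (abs_nonneg _) (hC 0)
  rw [← riesz m hm c x]
  calc |∑ k ∈ range (2*m), (μ m k / (4*m)) * TP c.1 c.2 (m+1) (x + t m k)|
      ≤ ∑ k ∈ range (2*m), |(μ m k / (4*m)) * TP c.1 c.2 (m+1) (x + t m k)| :=
        Finset.abs_sum_le_sum_abs _ _
    _ ≤ ∑ k ∈ range (2*m), (1 / Real.sin (t m k / 2)^2 / (4*m)) * C := by
        refine Finset.sum_le_sum fun k hk => ?_
        rw [abs_mul]
        have hs := sin_t_pos m k hm (Finset.mem_range.mp hk)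
        have habs : |μ m k / (4*m)| = 1 / Real.sin (t m k / 2)^2 / (4*m) := by
          rw [abs_div, μ, abs_div, abs_of_pos (by positivity : (0:ℝ) < 4*(m:ℝ)),
            _root_.abs_pow, _root_.abs_pow, abs_neg, abs_one, one_pow, abs_of_pos hs]
        rw [habs]
        exact mul_le_mul_of_nonneg_left (hC _) (by positivity)
    _ = m * C := by
        rw [← Finset.sum_mul]
        have : ∀ k ∈ range (2*m), 1 / Real.sin (t m k / 2)^2 / (4*m)
            = (1/(4*m)) * (1 / Real.sin (t m k / 2)^2) := by
          intro k _
          ring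
        rw [Finset.sum_congr rfl this, ← Finset.mul_sum, csc_sum m hm]
        field_simp

lemma bernstein_iter (m : ℕ) (hm : 0 < m) (c : (ℕ → ℝ) × (ℕ → ℝ)) (C : ℝ)
    (hC : ∀ x, |TP c.1 c.2 (m+1) x| ≤ C) (s : ℕ) (x : ℝ) :
    |TP (D^[s] c).1 (D^[s] c).2 (m+1) x| ≤ m^s * C := by
  induction s generalizing x with
  | zero => simpa using hC x
  | succ s ih =>
    rw [Function.iterate_succ_apply']
    calc |TP (D (D^[s] c)).1 (D (D^[s] c)).2 (m+1) x| ≤ m * (m^s * C) :=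
          bernstein_step m hm (D^[s] c) (m^s * C) ih x
      _ = m^(s+1) * C := by ring

lemma hasDerivAt_TP (c : (ℕ → ℝ) × (ℕ → ℝ)) (n : ℕ) (x : ℝ) :
    HasDerivAt (fun y => TP c.1 c.2 n y) (TP (D c).1 (D c).2 n x) x := by
  have h : ∀ j ∈ range n, HasDerivAt
      (fun y => c.1 j * Real.cos (j * y) + c.2 j * Real.sin (j * y))
      ((D c).1 j * Real.cos (j * x) + (D c).2 j * Real.sin (j * x)) x := by
    intro j _
    have hj : HasDerivAt (fun y : ℝ => (j:ℝ) * y) ((j:ℝ) * 1) x :=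
      (hasDerivAt_id x).const_mul (j:ℝ)
    have hcos := (hj.cos).const_mul (c.1 j)
    have hsin := (hj.sin).const_mul (c.2 j)
    have := hcos.add hsin
    refine this.congr_deriv ?_
    simp only [D]
    ring
  have := HasDerivAt.fun_sum h
  exact this

lemma iteratedDeriv_TP (c : (ℕ → ℝ) × (ℕ → ℝ)) (n s : ℕ) :
    iteratedDeriv s (fun y => TP c.1 c.2 n y)
      = fun y => TP (D^[s] c).1 (D^[s] c).2 n y := by
  induction s with
  | zero => simp [iteratedDeriv_zero]
  | succ s ih =>
    rw [iteratedDeriv_succ, ih]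
    funext x
    rw [Function.iterate_succ_apply']
    exact (hasDerivAt_TP (D^[s] c) n x).deriv

lemma TP_sub (a b a' b' : ℕ → ℝ) (n : ℕ) (x : ℝ) :
    TP (fun j => a j - a' j) (fun j => b j - b' j) n x = TP a b n x - TP a' b' n x := by
  simp only [TP, ← Finset.sum_sub_distrib]
  refine Finset.sum_congr rfl fun j _ => by ring

lemma D_iter_sub (p q : (ℕ → ℝ) × (ℕ → ℝ)) (s : ℕ) :
    D^[s] (fun j => p.1 j - q.1 j, fun j => p.2 j - q.2 j)
      = (fun j => (D^[s] p).1 j - (D^[s] q).1 j, fun j => (D^[s] p).2 j - (D^[s] q).2 j) := by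
  induction s with
  | zero => simp
  | succ s ih =>
    rw [Function.iterate_succ_apply', ih, Function.iterate_succ_apply',
      Function.iterate_succ_apply']
    simp only [D]
    refine Prod.ext (funext fun j => by ring) (funext fun j => by ring)

lemma TP_bound (a b : ℕ → ℝ) (n : ℕ) (x : ℝ) :
    |TP a b n x| ≤ ∑ j ∈ range n, (|a j| + |b j|) := by
  refine le_trans (Finset.abs_sum_le_sum_abs _ _) (Finset.sum_le_sum fun j _ => ?_)
  calc |a j * Real.cos (j*x) + b j * Real.sin (j*x)|
      ≤ |a j * Real.cos (j*x)| + |b j * Real.sin (j*x)| := abs_add_le _ _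
    _ ≤ |a j| + |b j| := by
        rw [abs_mul, abs_mul]
        have h1 := Real.abs_cos_le_one ((j:ℝ)*x)
        have h2 := Real.abs_sin_le_one ((j:ℝ)*x)
        have := abs_nonneg (a j)
        have := abs_nonneg (b j)
        nlinarith

end S19

/-- `T` is a (real) trigonometric polynomial of degree `< n`. -/
def TrigPolyDegLT (n : ℕ) (T : ℝ → ℝ) : Prop :=
  ∃ a b : ℕ → ℝ, ∀ x : ℝ,
    T x = ∑ j ∈ Finset.range n, (a j * Real.cos (j * x) + b j * Real.sin (j * x))

theorem stmt19 (r n : ℕ) (hn1 : r + 1 < n) (hn2 : 8 < n)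
    (τ F T : ℝ → ℝ) (θ : ℝ)
    (hτpoly : TrigPolyDegLT (r + 2) τ)
    (hFτ : ∀ x : ℝ, |F x - τ x| ≤ (2 * ((n : ℝ) ^ 2)⁻¹) ^ (r + 1))
    (hτθ : (1 : ℝ) / 2 ≤ |iteratedDeriv (r + 1) τ θ|)
    (hTpoly : TrigPolyDegLT n T)
    (hTθ : iteratedDeriv (r + 1) T θ = 0) :
    (1 : ℝ) / 4 < (n : ℝ) ^ (r + 1) * ⨆ x : ℝ, |F x - T x| := by
  obtain ⟨m, rfl⟩ : ∃ m, n = m + 1 := ⟨n - 1, by omega⟩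
  set n := m + 1 with hn
  have hm : 0 < m := by omega
  obtain ⟨aτ, bτ, hτ⟩ := hτpoly
  obtain ⟨aT, bT, hT⟩ := hTpoly
  -- pad τ's coefficients to length n
  set aτ' : ℕ → ℝ := fun j => if j < r + 2 then aτ j else 0 with haτ'
  set bτ' : ℕ → ℝ := fun j => if j < r + 2 then bτ j else 0 with hbτ'
  have hτ' : ∀ x, τ x = S19.TP aτ' bτ' n x := by
    intro x
    rw [hτ x, S19.TP]
    rw [Finset.sum_congr rfl (fun j hj => by
      have hj' := Finset.mem_range.mp hj
      simp only [haτ', hbτ', if_pos hj'] :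
      ∀ j ∈ Finset.range (r+2), (aτ j * Real.cos (j * x) + bτ j * Real.sin (j * x))
        = (aτ' j * Real.cos (j * x) + bτ' j * Real.sin (j * x)))]
    refine Finset.sum_subset (Finset.range_subset_range.mpr (by omega)) ?_
    intro j _ hj
    have hj' : ¬ (j < r + 2) := fun h => hj (Finset.mem_range.mpr h)
    simp only [haτ', hbτ', if_neg hj']
    ring
  have hT' : ∀ x, T x = S19.TP aT bT n x := hT
  -- the supremum
  set M := ⨆ x : ℝ, |F x - T x| with hM
  have hbdd : BddAbove (Set.range fun x => |F x - T x|) := by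
    refine ⟨(2 * ((n : ℝ) ^ 2)⁻¹) ^ (r + 1)
      + ((∑ j ∈ range n, (|aτ' j| + |bτ' j|)) + (∑ j ∈ range n, (|aT j| + |bT j|))), ?_⟩
    rintro _ ⟨x, rfl⟩
    have h0 : |F x - T x| ≤ |F x - τ x| + |τ x - T x| := abs_sub_le _ _ _
    have h1 : |τ x - T x| ≤ |τ x| + |T x| := abs_sub _ _
    have h2 : |τ x| ≤ ∑ j ∈ range n, (|aτ' j| + |bτ' j|) := by
      rw [hτ' x]; exact S19.TP_bound _ _ _ _
    have h3 : |T x| ≤ ∑ j ∈ range n, (|aT j| + |bT j|) := by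
      rw [hT' x]; exact S19.TP_bound _ _ _ _
    have h4 := hFτ x
    linarith
  have hMx : ∀ x, |F x - T x| ≤ M := fun x => le_ciSup hbdd x
  have hM0 : 0 ≤ M := le_trans (abs_nonneg _) (hMx 0)
  -- difference coefficients
  set c : (ℕ → ℝ) × (ℕ → ℝ) :=
    (fun j => aτ' j - aT j, fun j => bτ' j - bT j) with hc
  have hpc : ∀ x, S19.TP c.1 c.2 n x = τ x - T x := by
    intro x
    rw [hc]
    rw [S19.TP_sub aτ' bτ' aT bT n x, hτ' x, hT' x]
  -- bound on the difference polynomial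
  set Btot : ℝ := (2 * ((n : ℝ) ^ 2)⁻¹) ^ (r + 1) + M with hBtot
  have hbound : ∀ x, |S19.TP c.1 c.2 n x| ≤ Btot := by
    intro x
    rw [hpc x]
    calc |τ x - T x| ≤ |τ x - F x| + |F x - T x| := abs_sub_le _ _ _
      _ ≤ (2 * ((n : ℝ) ^ 2)⁻¹) ^ (r + 1) + M := by
          have := hFτ x
          rw [abs_sub_comm] at this
          linarith [hMx x]
  -- Bernstein
  have hbern := S19.bernstein_iter m hm c Btot hbound (r+1) θ
  -- identify the iterated derivative
  have hτfun : τ = fun y => S19.TP aτ' bτ' n y := funext hτ'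
  have hTfun : T = fun y => S19.TP aT bT n y := funext hT'
  have hid : S19.TP (S19.D^[r+1] c).1 (S19.D^[r+1] c).2 n θ
      = iteratedDeriv (r+1) τ θ - iteratedDeriv (r+1) T θ := by
    rw [hτfun, hTfun, S19.iteratedDeriv_TP (aτ', bτ') n (r+1),
      S19.iteratedDeriv_TP (aT, bT) n (r+1), hc]
    rw [show ((fun j => aτ' j - aT j, fun j => bτ' j - bT j) : (ℕ→ℝ)×(ℕ→ℝ))
        = (fun j => (aτ', bτ').1 j - (aT, bT).1 j,
           fun j => (aτ', bτ').2 j - (aT, bT).2 j) from rfl]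
    rw [S19.D_iter_sub (aτ', bτ') (aT, bT) (r+1)]
    exact S19.TP_sub _ _ _ _ n θ
  -- final arithmetic
  have h12 : 1/2 ≤ |S19.TP (S19.D^[r+1] c).1 (S19.D^[r+1] c).2 n θ| := by
    rw [hid, hTθ, sub_zero]
    exact hτθ
  have hkey : (1:ℝ)/2 ≤ (m:ℝ)^(r+1) * Btot := le_trans h12 hbern
  have hnR : (9:ℝ) ≤ (n:ℝ) := by exact_mod_cast (by omega : 9 ≤ n)
  have hn0 : (0:ℝ) < (n:ℝ) := by linarith
  have hmn : (m:ℝ)^(r+1) ≤ (n:ℝ)^(r+1) :=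
    pow_le_pow_left₀ (by positivity) (by exact_mod_cast (by omega : m ≤ n)) _
  have hB0 : (0:ℝ) ≤ Btot := add_nonneg (by positivity) hM0
  have h2 : (1:ℝ)/2 ≤ (n:ℝ)^(r+1) * Btot :=
    le_trans hkey (mul_le_mul_of_nonneg_right hmn hB0)
  have heq : (n:ℝ)^(r+1) * (2*((n:ℝ)^2)⁻¹)^(r+1) = (2/(n:ℝ))^(r+1) := by
    rw [← mul_pow]
    congr 1
    field_simp
  have h29 : 2/(n:ℝ) ≤ 2/9 := by
    rw [div_le_div_iff₀ hn0 (by norm_num)]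
    linarith
  have hsmall : (2/(n:ℝ))^(r+1) ≤ 2/9 := by
    calc (2/(n:ℝ))^(r+1) ≤ (2/(n:ℝ))^1 :=
          pow_le_pow_of_le_one (by positivity) (by linarith) (by omega)
      _ = 2/(n:ℝ) := pow_one _
      _ ≤ 2/9 := h29
  have hfinal : (1:ℝ)/2 ≤ 2/9 + (n:ℝ)^(r+1) * M := by
    rw [hBtot, mul_add, heq] at h2
    linarith
  have hnM : (1:ℝ)/4 < (n:ℝ)^(r+1) * M := by linarith
  exact hnM
end
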